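/- arXiv:2302.09159 — 3 statements merged into one kernel-verified Lean document; each statement's English description precedes it below -/
import Mathlib

section
/- Let L, K be positive integers, let π*, π'* lie in the open simplex Δ^{L-1}, let φ* be an L×K matrix each of whose rows φ*_{l:} lies in the open simplex Δ^{K-1}, and assume φ* has rank L. Let Θ = Δ̄^{L-1} × Δ̄^{L-1} × (Δ̄^{K-1})^L and let p : Θ → ℝ be continuous and strictly positive. For positive integers N, N', let (Y_1, C_1), …, (Y_N, C_N) be i.i.d. random pairs with P(Y_i = l, C_i = k) = π*_l φ*_{lk}, independent of i.i.d. random variables C'_1, …, C'_{N'} with P(C'_j = k) = Σ_{l=1}^L π'*_l φ*_{lk}. For θ = (π, π', φ) ∈ Θ define the posterior score G_{N,N'}(θ) = p(θ) · ∏_{i=1}^N π_{Y_i} φ_{Y_i C_i} · ∏_{j=1}^{N'} (Σ_{l=1}^L π'_l φ_{l C'_j}). Then for every ε > 0 and δ > 0 there exist N₀ and N₀' such that for all N ≥ N₀ and N' ≥ N₀', with probability at least 1 − δ, every θ̂ ∈ Θ maximizing G_{N,N'} over Θ satisfies ‖θ̂ − (π*, π'*, φ*)‖ < ε. -/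
open Finset MeasureTheory

/-- The open simplex: vectors with strictly positive entries summing to 1. -/
def openSimplex {n : ℕ} (v : Fin n → ℝ) : Prop :=
  (∀ i, 0 < v i) ∧ ∑ i, v i = 1

/-- The closed simplex: vectors with nonnegative entries summing to 1. -/
def closedSimplex {n : ℕ} (v : Fin n → ℝ) : Prop :=
  (∀ i, 0 ≤ v i) ∧ ∑ i, v i = 1

/-- The parameter space `Θ = Δ̄^{L-1} × Δ̄^{L-1} × (Δ̄^{K-1})^L`. -/
def paramSpace (L K : ℕ) :
    Set ((Fin L → ℝ) × (Fin L → ℝ) × (Fin L → Fin K → ℝ)) :=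
  {θ | closedSimplex θ.1 ∧ closedSimplex θ.2.1 ∧ ∀ l, closedSimplex (θ.2.2 l)}

/-- The posterior score
`G_{N,N'}(θ) = p(θ) ∏_i π_{Y_i} φ_{Y_i C_i} ∏_j (Σ_l π'_l φ_{l C'_j})`, evaluated on the
data `ω = ((Y_i, C_i)_i, (C'_j)_j)`. -/
def posteriorScore {L K N N' : ℕ}
    (p : (Fin L → ℝ) × (Fin L → ℝ) × (Fin L → Fin K → ℝ) → ℝ)
    (ω : (Fin N → Fin L × Fin K) × (Fin N' → Fin K))
    (θ : (Fin L → ℝ) × (Fin L → ℝ) × (Fin L → Fin K → ℝ)) : ℝ :=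
  p θ * (∏ i, θ.1 (ω.1 i).1 * θ.2.2 (ω.1 i).1 (ω.1 i).2) *
    ∏ j, ∑ l, θ.2.1 l * θ.2.2 l (ω.2 j)

set_option maxHeartbeats 1600000


lemma MAPaux.sum_pi_prod {N : ℕ} {β : Type*} [Fintype β] [DecidableEq β] (h : Fin N → β → ℝ) :
    ∑ y : Fin N → β, ∏ i, h i (y i) = ∏ i, ∑ u, h i u := by
  rw [Finset.prod_univ_sum]
  rw [Fintype.piFinset_univ]

lemma MAPaux.sum_comp_count {N : ℕ} {β : Type*} [Fintype β] [DecidableEq β] (g : Fin N → β) (f : β → ℝ) :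
    ∑ i, f (g i) = ∑ c, ((Finset.univ.filter (fun i => g i = c)).card : ℝ) * f c := by
  rw [← Finset.sum_fiberwise Finset.univ g (fun i => f (g i))]
  refine Finset.sum_congr rfl fun c _ => ?_
  rw [Finset.sum_congr rfl (fun i hi => by rw [(Finset.mem_filter.mp hi).2]), Finset.sum_const,
    nsmul_eq_mul]

lemma MAPaux.markov {Ω : Type*} [Fintype Ω] (w f : Ω → ℝ) (hw : ∀ ω, 0 ≤ w ω)
    (hf : ∀ ω, 0 ≤ f ω) {t : ℝ} (ht : 0 < t) :
    ∑ ω ∈ Finset.univ.filter (fun ω => t ≤ f ω), w ω ≤ (∑ ω, w ω * f ω) / t := by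
  rw [le_div_iff₀ ht]
  calc (∑ ω ∈ Finset.univ.filter (fun ω => t ≤ f ω), w ω) * t
      = ∑ ω ∈ Finset.univ.filter (fun ω => t ≤ f ω), w ω * t := by rw [Finset.sum_mul]
    _ ≤ ∑ ω ∈ Finset.univ.filter (fun ω => t ≤ f ω), w ω * f ω := by
        refine Finset.sum_le_sum fun ω hω => ?_
        exact mul_le_mul_of_nonneg_left (Finset.mem_filter.mp hω).2 (hw ω)
    _ ≤ ∑ ω, w ω * f ω := by
        refine Finset.sum_le_sum_of_subset_of_nonneg (Finset.filter_subset _ _) fun ω _ _ =>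
          mul_nonneg (hw ω) (hf ω)

lemma MAPaux.gibbs_le {β : Type*} [Fintype β] (P q : β → ℝ) (hP : ∀ u, 0 < P u)
    (hq : ∀ u, 0 < q u) :
    ∑ u, P u * (Real.log (q u) - Real.log (P u)) ≤ (∑ u, q u) - ∑ u, P u := by
  rw [← Finset.sum_sub_distrib]
  refine Finset.sum_le_sum fun u _ => ?_
  have h1 : Real.log (q u) - Real.log (P u) = Real.log (q u / P u) := by
    rw [Real.log_div (hq u).ne' (hP u).ne']
  rw [h1]
  have h2 : Real.log (q u / P u) ≤ q u / P u - 1 :=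
    Real.log_le_sub_one_of_pos (div_pos (hq u) (hP u))
  calc P u * Real.log (q u / P u) ≤ P u * (q u / P u - 1) :=
        mul_le_mul_of_nonneg_left h2 (hP u).le
    _ = q u - P u := by
        rw [mul_sub, mul_div_cancel₀ _ (hP u).ne', mul_one]

lemma MAPaux.gibbs_eq {β : Type*} [Fintype β] (P q : β → ℝ) (hP : ∀ u, 0 < P u)
    (hq : ∀ u, 0 < q u) (hsum : ∑ u, q u ≤ ∑ u, P u)
    (hge : ∑ u, P u * Real.log (P u) ≤ ∑ u, P u * Real.log (q u)) : ∀ u, q u = P u := by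
  have key : ∑ u, (q u - P u - P u * (Real.log (q u) - Real.log (P u))) = 0 := by
    have h1 : ∑ u, P u * (Real.log (q u) - Real.log (P u)) ≤ (∑ u, q u) - ∑ u, P u :=
      MAPaux.gibbs_le P q hP hq
    have h2 : 0 ≤ ∑ u, P u * (Real.log (q u) - Real.log (P u)) := by
      have := Finset.sum_sub_distrib (f := fun u => P u * Real.log (q u))
        (g := fun u => P u * Real.log (P u)) (s := Finset.univ)
      have h3 : ∑ u, P u * (Real.log (q u) - Real.log (P u)) =
          (∑ u, P u * Real.log (q u)) - ∑ u, P u * Real.log (P u) := by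
        rw [← Finset.sum_sub_distrib]; exact Finset.sum_congr rfl fun u _ => by ring
      rw [h3]; linarith
    rw [Finset.sum_sub_distrib, Finset.sum_sub_distrib]
    linarith
  have hnn : ∀ u ∈ Finset.univ, 0 ≤ q u - P u - P u * (Real.log (q u) - Real.log (P u)) := by
    intro u _
    have h1 : Real.log (q u) - Real.log (P u) = Real.log (q u / P u) := by
      rw [Real.log_div (hq u).ne' (hP u).ne']
    rw [h1]
    have h2 : Real.log (q u / P u) ≤ q u / P u - 1 :=
      Real.log_le_sub_one_of_pos (div_pos (hq u) (hP u))
    have h3 : P u * Real.log (q u / P u) ≤ P u * (q u / P u - 1) :=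
      mul_le_mul_of_nonneg_left h2 (hP u).le
    have h4 : P u * (q u / P u - 1) = q u - P u := by
      rw [mul_sub, mul_div_cancel₀ _ (hP u).ne', mul_one]
    linarith
  have hzero := (Finset.sum_eq_zero_iff_of_nonneg hnn).mp key
  intro u
  have h0 := hzero u (Finset.mem_univ u)
  by_contra hne
  have hx : q u / P u ≠ 1 := by
    intro h; exact hne ((div_eq_one_iff_eq (hP u).ne').mp h)
  have h2 : Real.log (q u / P u) < q u / P u - 1 :=
    Real.log_lt_sub_one_of_pos (div_pos (hq u) (hP u)) hx
  have h1 : Real.log (q u) - Real.log (P u) = Real.log (q u / P u) := by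
    rw [Real.log_div (hq u).ne' (hP u).ne']
  rw [h1] at h0
  have h3 : P u * Real.log (q u / P u) < P u * (q u / P u - 1) :=
    mul_lt_mul_of_pos_left h2 (hP u)
  have h4 : P u * (q u / P u - 1) = q u - P u := by
    rw [mul_sub, mul_div_cancel₀ _ (hP u).ne', mul_one]
  linarith

lemma MAPaux.variance_bound {N : ℕ} {β : Type*} [Fintype β] [DecidableEq β] (a : β → ℝ)
    (ha0 : ∀ u, 0 ≤ a u) (ha1 : ∑ u, a u = 1) (c : β) :
    ∑ y : Fin N → β, (∏ i, a (y i)) * (∑ i, ((if y i = c then (1:ℝ) else 0) - a c)) ^ 2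
      = N * (a c * (1 - a c)) := by
  set d : β → ℝ := fun u => (if u = c then (1:ℝ) else 0) - a c with hd
  have hS1 : ∑ u, a u * d u = 0 := by
    have : ∀ u, a u * d u = (if u = c then a u else 0) - a u * a c := by
      intro u; by_cases h : u = c <;> simp [hd, h] <;> ring
    rw [Finset.sum_congr rfl fun u _ => this u, Finset.sum_sub_distrib]
    rw [Finset.sum_ite_eq' Finset.univ c a]
    simp [← Finset.sum_mul, ha1]
  have hS2 : ∑ u, a u * (d u * d u) = a c * (1 - a c) := by
    have : ∀ u, a u * (d u * d u) = (if u = c then a u * (1 - 2 * a c) else 0) + a u * (a c * a c) := by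
      intro u; by_cases h : u = c <;> simp [hd, h] <;> ring
    rw [Finset.sum_congr rfl fun u _ => this u, Finset.sum_add_distrib]
    rw [Finset.sum_ite_eq' Finset.univ c (fun u => a u * (1 - 2 * a c))]
    simp [← Finset.sum_mul, ha1]
    ring
  -- expand the square
  have expand : ∀ y : Fin N → β,
      (∏ i, a (y i)) * (∑ i, d (y i)) ^ 2
        = ∑ p : Fin N × Fin N, ((∏ i', a (y i')) * (d (y p.1) * d (y p.2))) := by
    intro y
    rw [sq, Finset.sum_mul_sum, Fintype.sum_prod_type, Finset.mul_sum]
    exact Finset.sum_congr rfl fun i _ => by rw [Finset.mul_sum]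
  rw [Finset.sum_congr rfl fun y _ => expand y]
  rw [Finset.sum_comm]
  -- now per (i,j)
  have key : ∀ i j : Fin N, ∑ y : Fin N → β, (∏ i', a (y i')) * (d (y i) * d (y j))
      = if i = j then a c * (1 - a c) else 0 := by
    intro i j
    have hfact : ∀ y : Fin N → β, (∏ i', a (y i')) * (d (y i) * d (y j)) =
        ∏ i', (a (y i') * ((if i' = i then d (y i') else 1) * (if i' = j then d (y i') else 1))) := by
      intro y
      rw [Finset.prod_mul_distrib, Finset.prod_mul_distrib]
      rw [Finset.prod_ite_eq' Finset.univ i (fun i' => d (y i'))]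
      rw [Finset.prod_ite_eq' Finset.univ j (fun i' => d (y i'))]
      simp
    rw [Finset.sum_congr rfl fun y _ => hfact y]
    rw [MAPaux.sum_pi_prod (fun i' u => a u * ((if i' = i then d u else 1) * (if i' = j then d u else 1)))]
    by_cases hij : i = j
    · subst hij
      have : ∀ i' : Fin N, ∑ u, a u * ((if i' = i then d u else 1) * (if i' = i then d u else 1))
          = if i' = i then a c * (1 - a c) else 1 := by
        intro i'
        by_cases h : i' = i <;> simp [h, hS2, ha1]
      rw [Finset.prod_congr rfl fun i' _ => this i']
      rw [Finset.prod_ite_eq' Finset.univ i (fun _ => a c * (1 - a c))]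
      simp
    · rw [if_neg hij]
      refine Finset.prod_eq_zero (Finset.mem_univ i) ?_
      have : ∀ u, a u * ((if i = i then d u else 1) * (if i = j then d u else 1)) = a u * d u := by
        intro u; rw [if_pos rfl, if_neg hij, mul_one]
      rw [Finset.sum_congr rfl fun u _ => this u, hS1]
  rw [Finset.sum_congr rfl fun p _ => key p.1 p.2]
  rw [Fintype.sum_prod_type]
  have : ∀ i : Fin N, (∑ j : Fin N, if i = j then a c * (1 - a c) else 0) = a c * (1 - a c) := by
    intro i
    rw [Finset.sum_ite_eq Finset.univ i (fun _ => a c * (1 - a c))]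
    simp
  rw [Finset.sum_congr rfl fun i _ => this i, Finset.sum_const, Finset.card_univ]
  simp [nsmul_eq_mul]

lemma MAPaux.rank_inj {L K : ℕ} (φstar : Fin L → Fin K → ℝ)
    (hrank : (Matrix.of φstar).rank = L) (v w : Fin L → ℝ)
    (h : ∀ k, ∑ l, v l * φstar l k = ∑ l, w l * φstar l k) : v = w := by
  set M := (Matrix.of φstar).transpose with hM
  have hr : M.rank = L := by rw [hM, Matrix.rank_transpose]; exact hrank
  have hinj : Function.Injective M.mulVecLin := by
    rw [← LinearMap.ker_eq_bot]
    have hfin : Module.finrank ℝ (Fin L → ℝ) = L := by simp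
    have := LinearMap.finrank_range_add_finrank_ker (M.mulVecLin)
    rw [hfin] at this
    have hrange : Module.finrank ℝ (LinearMap.range M.mulVecLin) = L := by
      rw [← Matrix.rank]; exact hr
    rw [← Submodule.finrank_eq_zero (S := LinearMap.ker M.mulVecLin)]
    omega
  have : M.mulVecLin v = M.mulVecLin w := by
    funext k
    simp only [Matrix.mulVecLin_apply, Matrix.mulVec, dotProduct, hM,
      Matrix.transpose_apply, Matrix.of_apply]
    calc ∑ l, φstar l k * v l = ∑ l, v l * φstar l k := by
          exact Finset.sum_congr rfl fun l _ => mul_comm _ _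
      _ = ∑ l, w l * φstar l k := h k
      _ = ∑ l, φstar l k * w l := Finset.sum_congr rfl fun l _ => mul_comm _ _
  exact hinj this

lemma MAPaux.measure_finset {Ω : Type*} [Fintype Ω] [MeasurableSpace Ω]
    [MeasurableSingletonClass Ω] (μ : Measure Ω) (w : Ω → ℝ) (hw0 : ∀ ω, 0 ≤ w ω)
    (hw : ∀ ω, μ {ω} = ENNReal.ofReal (w ω)) (s : Finset Ω) :
    μ s = ENNReal.ofReal (∑ ω ∈ s, w ω) := by
  have h1 : ∑ x ∈ s, μ {x} = μ s := by
    rw [show (s : Set Ω) = ⋃ x ∈ s, {x} by ext y; simp]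
    exact (measure_biUnion_finset (by simp [Set.PairwiseDisjoint, Set.Pairwise, Function.onFun])
      (fun _ _ => measurableSet_singleton _)).symm
  rw [← h1, Finset.sum_congr rfl fun ω _ => hw ω]
  rw [← ENNReal.ofReal_sum_of_nonneg fun ω _ => hw0 ω]

lemma MAPaux.paramSpace_eq (L K : ℕ) :
    paramSpace L K = (stdSimplex ℝ (Fin L)) ×ˢ ((stdSimplex ℝ (Fin L)) ×ˢ
      (Set.univ.pi fun _ : Fin L => stdSimplex ℝ (Fin K))) := by
  ext θ
  simp only [paramSpace, closedSimplex, stdSimplex, Set.mem_setOf_eq, Set.mem_prod,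
    Set.mem_pi, Set.mem_univ, forall_true_left]

lemma MAPaux.paramSpace_compact (L K : ℕ) : IsCompact (paramSpace L K) := by
  rw [MAPaux.paramSpace_eq]
  exact (isCompact_stdSimplex _ _).prod ((isCompact_stdSimplex _ _).prod
    (isCompact_univ_pi fun _ => isCompact_stdSimplex _ _))

-- basic bounds for members of paramSpace
lemma MAPaux.simplex_le_one {n : ℕ} {v : Fin n → ℝ} (hv : closedSimplex v) (i : Fin n) :
    v i ≤ 1 := by
  rw [← hv.2]
  exact Finset.single_le_sum (fun j _ => hv.1 j) (Finset.mem_univ i)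

lemma MAPaux.Q_sum {L K : ℕ} {θ : (Fin L → ℝ) × (Fin L → ℝ) × (Fin L → Fin K → ℝ)}
    (hθ : θ ∈ paramSpace L K) : ∑ c : Fin L × Fin K, θ.1 c.1 * θ.2.2 c.1 c.2 = 1 := by
  rw [Fintype.sum_prod_type]
  have : ∀ l : Fin L, ∑ k, θ.1 l * θ.2.2 l k = θ.1 l := by
    intro l; rw [← Finset.mul_sum, (hθ.2.2 l).2, mul_one]
  rw [Finset.sum_congr rfl fun l _ => this l, hθ.1.2]

lemma MAPaux.R_sum {L K : ℕ} {θ : (Fin L → ℝ) × (Fin L → ℝ) × (Fin L → Fin K → ℝ)}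
    (hθ : θ ∈ paramSpace L K) : ∑ k, ∑ l, θ.2.1 l * θ.2.2 l k = 1 := by
  rw [Finset.sum_comm]
  have : ∀ l : Fin L, ∑ k, θ.2.1 l * θ.2.2 l k = θ.2.1 l := by
    intro l; rw [← Finset.mul_sum, (hθ.2.2 l).2, mul_one]
  rw [Finset.sum_congr rfl fun l _ => this l, hθ.2.1.2]

lemma MAPaux.Q_nonneg {L K : ℕ} {θ : (Fin L → ℝ) × (Fin L → ℝ) × (Fin L → Fin K → ℝ)}
    (hθ : θ ∈ paramSpace L K) (c : Fin L × Fin K) : 0 ≤ θ.1 c.1 * θ.2.2 c.1 c.2 :=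
  mul_nonneg (hθ.1.1 c.1) ((hθ.2.2 c.1).1 c.2)

lemma MAPaux.Q_le_one {L K : ℕ} {θ : (Fin L → ℝ) × (Fin L → ℝ) × (Fin L → Fin K → ℝ)}
    (hθ : θ ∈ paramSpace L K) (c : Fin L × Fin K) : θ.1 c.1 * θ.2.2 c.1 c.2 ≤ 1 :=
  mul_le_one₀ (MAPaux.simplex_le_one hθ.1 c.1) ((hθ.2.2 c.1).1 c.2)
    (MAPaux.simplex_le_one (hθ.2.2 c.1) c.2)

lemma MAPaux.R_nonneg {L K : ℕ} {θ : (Fin L → ℝ) × (Fin L → ℝ) × (Fin L → Fin K → ℝ)}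
    (hθ : θ ∈ paramSpace L K) (k : Fin K) : 0 ≤ ∑ l, θ.2.1 l * θ.2.2 l k :=
  Finset.sum_nonneg fun l _ => mul_nonneg (hθ.2.1.1 l) ((hθ.2.2 l).1 k)

lemma MAPaux.R_le_one {L K : ℕ} {θ : (Fin L → ℝ) × (Fin L → ℝ) × (Fin L → Fin K → ℝ)}
    (hθ : θ ∈ paramSpace L K) (k : Fin K) : ∑ l, θ.2.1 l * θ.2.2 l k ≤ 1 := by
  calc ∑ l, θ.2.1 l * θ.2.2 l k ≤ ∑ l, θ.2.1 l * 1 := by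
        refine Finset.sum_le_sum fun l _ => ?_
        exact mul_le_mul_of_nonneg_left (MAPaux.simplex_le_one (hθ.2.2 l) k) (hθ.2.1.1 l)
    _ = 1 := by simp [hθ.2.1.2]

lemma MAPaux.Q_continuous {L K : ℕ} (c : Fin L × Fin K) :
    Continuous fun θ : (Fin L → ℝ) × (Fin L → ℝ) × (Fin L → Fin K → ℝ) =>
      θ.1 c.1 * θ.2.2 c.1 c.2 := by
  exact ((continuous_apply c.1).comp continuous_fst).mul
    ((continuous_apply c.2).comp ((continuous_apply c.1).comp (continuous_snd.comp continuous_snd)))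

lemma MAPaux.R_continuous {L K : ℕ} (k : Fin K) :
    Continuous fun θ : (Fin L → ℝ) × (Fin L → ℝ) × (Fin L → Fin K → ℝ) =>
      ∑ l, θ.2.1 l * θ.2.2 l k := by
  refine continuous_finset_sum _ fun l _ => ?_
  exact ((continuous_apply l).comp (continuous_fst.comp continuous_snd)).mul
    ((continuous_apply k).comp ((continuous_apply l).comp (continuous_snd.comp continuous_snd)))

lemma MAPaux.ident {L K : ℕ} (hL : 0 < L) (πstar π'star : Fin L → ℝ) (φstar : Fin L → Fin K → ℝ)
    (hπ : openSimplex πstar) (hπ' : openSimplex π'star) (hφ : ∀ l, openSimplex (φstar l))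
    (hrank : (Matrix.of φstar).rank = L)
    (θ : (Fin L → ℝ) × (Fin L → ℝ) × (Fin L → Fin K → ℝ)) (hθ : θ ∈ paramSpace L K)
    (hQpos : ∀ c : Fin L × Fin K, 0 < θ.1 c.1 * θ.2.2 c.1 c.2)
    (hRpos : ∀ k, 0 < ∑ l, θ.2.1 l * θ.2.2 l k)
    (hA : ∑ c : Fin L × Fin K, (πstar c.1 * φstar c.1 c.2) * Real.log (πstar c.1 * φstar c.1 c.2)
      ≤ ∑ c : Fin L × Fin K, (πstar c.1 * φstar c.1 c.2) * Real.log (θ.1 c.1 * θ.2.2 c.1 c.2))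
    (hB : ∑ k, (∑ l, π'star l * φstar l k) * Real.log (∑ l, π'star l * φstar l k)
      ≤ ∑ k, (∑ l, π'star l * φstar l k) * Real.log (∑ l, θ.2.1 l * θ.2.2 l k)) :
    θ = (πstar, π'star, φstar) := by
  haveI : Nonempty (Fin L) := ⟨⟨0, hL⟩⟩
  have hθstar : (πstar, π'star, φstar) ∈ paramSpace L K :=
    ⟨⟨fun i => (hπ.1 i).le, hπ.2⟩, ⟨fun i => (hπ'.1 i).le, hπ'.2⟩,
      fun l => ⟨fun k => ((hφ l).1 k).le, (hφ l).2⟩⟩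
  have haPos : ∀ c : Fin L × Fin K, 0 < πstar c.1 * φstar c.1 c.2 :=
    fun c => mul_pos (hπ.1 c.1) ((hφ c.1).1 c.2)
  have hQeq : ∀ c : Fin L × Fin K, θ.1 c.1 * θ.2.2 c.1 c.2 = πstar c.1 * φstar c.1 c.2 := by
    refine MAPaux.gibbs_eq _ _ haPos hQpos (le_of_eq ?_) hA
    rw [MAPaux.Q_sum hθ, MAPaux.Q_sum hθstar]
  have hbPos : ∀ k, 0 < ∑ l, π'star l * φstar l k := fun k =>
    Finset.sum_pos (fun l _ => mul_pos (hπ'.1 l) ((hφ l).1 k)) Finset.univ_nonempty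
  have hReq : ∀ k, ∑ l, θ.2.1 l * θ.2.2 l k = ∑ l, π'star l * φstar l k := by
    refine MAPaux.gibbs_eq _ _ hbPos hRpos (le_of_eq ?_) hB
    rw [MAPaux.R_sum hθ, MAPaux.R_sum hθstar]
  -- recover π
  have hπeq : ∀ l, θ.1 l = πstar l := by
    intro l
    have h1 : ∑ k, θ.1 l * θ.2.2 l k = ∑ k, πstar l * φstar l k :=
      Finset.sum_congr rfl fun k _ => hQeq (l, k)
    rw [← Finset.mul_sum, ← Finset.mul_sum, (hθ.2.2 l).2, (hφ l).2, mul_one, mul_one] at h1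
    exact h1
  -- recover φ
  have hφeq : ∀ l k, θ.2.2 l k = φstar l k := by
    intro l k
    have h1 := hQeq (l, k)
    rw [hπeq l] at h1
    exact mul_left_cancel₀ (hπ.1 l).ne' h1
  -- recover π'
  have hπ'eq : θ.2.1 = π'star := by
    refine MAPaux.rank_inj φstar hrank _ _ fun k => ?_
    rw [← hReq k]
    exact Finset.sum_congr rfl fun l _ => by rw [hφeq l k]
  -- assemble
  have h1 : θ.1 = πstar := funext hπeq
  have h2 : θ.2.2 = φstar := funext fun l => funext fun k => hφeq l k
  exact Prod.ext h1 (Prod.ext hπ'eq h2)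

lemma MAPaux.deficiency {L K : ℕ} (hL : 0 < L) (hK : 0 < K)
    (πstar π'star : Fin L → ℝ) (φstar : Fin L → Fin K → ℝ)
    (hπ : openSimplex πstar) (hπ' : openSimplex π'star) (hφ : ∀ l, openSimplex (φstar l))
    (hrank : (Matrix.of φstar).rank = L) (ε : ℝ) (hε : 0 < ε) :
    ∃ t η : ℝ, 0 < t ∧ t ≤ 1 ∧ 0 < η ∧ ∀ θ ∈ paramSpace L K,
      ε ≤ dist θ (πstar, π'star, φstar) →
      (∑ c : Fin L × Fin K, (πstar c.1 * φstar c.1 c.2) * Real.log (max (θ.1 c.1 * θ.2.2 c.1 c.2) t)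
        ≤ (∑ c : Fin L × Fin K, (πstar c.1 * φstar c.1 c.2) * Real.log (πstar c.1 * φstar c.1 c.2)) - η)
      ∨ (∑ k, (∑ l, π'star l * φstar l k) * Real.log (max (∑ l, θ.2.1 l * θ.2.2 l k) t)
        ≤ (∑ k, (∑ l, π'star l * φstar l k) * Real.log (∑ l, π'star l * φstar l k)) - η) := by
  haveI : Nonempty (Fin L) := ⟨⟨0, hL⟩⟩
  haveI : Nonempty (Fin K) := ⟨⟨0, hK⟩⟩
  set a : Fin L × Fin K → ℝ := fun c => πstar c.1 * φstar c.1 c.2 with ha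
  set b : Fin K → ℝ := fun k => ∑ l, π'star l * φstar l k with hb
  have haPos : ∀ c, 0 < a c := fun c => mul_pos (hπ.1 c.1) ((hφ c.1).1 c.2)
  have hbPos : ∀ k, 0 < b k := fun k =>
    Finset.sum_pos (fun l _ => mul_pos (hπ'.1 l) ((hφ l).1 k)) Finset.univ_nonempty
  set Astar : ℝ := ∑ c, a c * Real.log (a c) with hAstar
  set Bstar : ℝ := ∑ k, b k * Real.log (b k) with hBstar
  set FA : ℕ → (Fin L → ℝ) × (Fin L → ℝ) × (Fin L → Fin K → ℝ) → ℝ :=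
    fun n θ => ∑ c, a c * Real.log (max (θ.1 c.1 * θ.2.2 c.1 c.2) (((n:ℝ)+1)⁻¹)) with hFA
  set FB : ℕ → (Fin L → ℝ) × (Fin L → ℝ) × (Fin L → Fin K → ℝ) → ℝ :=
    fun n θ => ∑ k, b k * Real.log (max (∑ l, θ.2.1 l * θ.2.2 l k) (((n:ℝ)+1)⁻¹)) with hFB
  have htpos : ∀ n : ℕ, (0:ℝ) < ((n:ℝ)+1)⁻¹ := fun n => by positivity
  have htle1 : ∀ n : ℕ, ((n:ℝ)+1)⁻¹ ≤ 1 := fun n => by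
    rw [inv_le_one_iff₀]; right; linarith [Nat.cast_nonneg (α := ℝ) n]
  have hFAcont : ∀ n, Continuous (FA n) := by
    intro n
    refine continuous_finset_sum _ fun c _ => (continuous_const.mul ?_)
    exact Continuous.log ((MAPaux.Q_continuous c).max continuous_const)
      (fun θ => (lt_of_lt_of_le (htpos n) (le_max_right _ _)).ne')
  have hFBcont : ∀ n, Continuous (FB n) := by
    intro n
    refine continuous_finset_sum _ fun k _ => (continuous_const.mul ?_)
    exact Continuous.log ((MAPaux.R_continuous k).max continuous_const)
      (fun θ => (lt_of_lt_of_le (htpos n) (le_max_right _ _)).ne')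
  have hmonoA : ∀ {n m : ℕ}, n ≤ m → ∀ θ, FA m θ ≤ FA n θ := by
    intro n m hnm θ
    refine Finset.sum_le_sum fun c _ => mul_le_mul_of_nonneg_left ?_ (haPos c).le
    refine Real.log_le_log (lt_of_lt_of_le (htpos m) (le_max_right _ _)) ?_
    refine max_le_max le_rfl ?_
    refine inv_anti₀ (by positivity) ?_
    have := Nat.cast_le (α := ℝ) |>.mpr hnm
    linarith
  have hmonoB : ∀ {n m : ℕ}, n ≤ m → ∀ θ, FB m θ ≤ FB n θ := by
    intro n m hnm θ
    refine Finset.sum_le_sum fun k _ => mul_le_mul_of_nonneg_left ?_ (hbPos k).le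
    refine Real.log_le_log (lt_of_lt_of_le (htpos m) (le_max_right _ _)) ?_
    refine max_le_max le_rfl ?_
    refine inv_anti₀ (by positivity) ?_
    have := Nat.cast_le (α := ℝ) |>.mpr hnm
    linarith
  set S : Set ((Fin L → ℝ) × (Fin L → ℝ) × (Fin L → Fin K → ℝ)) :=
    paramSpace L K ∩ {θ | ε ≤ dist θ (πstar, π'star, φstar)} with hS
  have hScpt : IsCompact S := (MAPaux.paramSpace_compact L K).inter_right
    (isClosed_le continuous_const (Continuous.dist continuous_id continuous_const))
  set U : ℕ → Set ((Fin L → ℝ) × (Fin L → ℝ) × (Fin L → Fin K → ℝ)) :=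
    fun n => {θ | FA n θ < Astar ∨ FB n θ < Bstar} with hU
  have hUopen : ∀ n, IsOpen (U n) := fun n =>
    (isOpen_lt (hFAcont n) continuous_const).union (isOpen_lt (hFBcont n) continuous_const)
  have hcover : S ⊆ ⋃ n, U n := by
    rintro θ ⟨hθΘ, hθd⟩
    by_contra hnc
    simp only [Set.mem_iUnion, hU, Set.mem_setOf_eq, not_exists, not_or, not_lt] at hnc
    -- Step 1: all Q positive
    have hQpos : ∀ c : Fin L × Fin K, 0 < θ.1 c.1 * θ.2.2 c.1 c.2 := by
      by_contra hq
      push_neg at hq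
      obtain ⟨c0, hc0⟩ := hq
      have hQ0 : θ.1 c0.1 * θ.2.2 c0.1 c0.2 = 0 := le_antisymm hc0 (MAPaux.Q_nonneg hθΘ c0)
      -- choose n large
      obtain ⟨n, hn⟩ := exists_nat_ge (Real.exp ((|Astar| + 1) / a c0))
      have hlog : (|Astar| + 1) / a c0 ≤ Real.log ((n:ℝ)+1) := by
        rw [← Real.log_exp ((|Astar| + 1) / a c0)]
        refine Real.log_le_log (Real.exp_pos _) (by linarith)
      have hb1 : FA n θ ≤ a c0 * Real.log (((n:ℝ)+1)⁻¹) := by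
        have hterm : ∀ c : Fin L × Fin K, a c * Real.log (max (θ.1 c.1 * θ.2.2 c.1 c.2) (((n:ℝ)+1)⁻¹))
            ≤ if c = c0 then a c0 * Real.log (((n:ℝ)+1)⁻¹) else 0 := by
          intro c
          by_cases hcc : c = c0
          · subst hcc
            rw [if_pos rfl, hQ0, max_eq_right (htpos n).le]
          · rw [if_neg hcc]
            refine mul_nonpos_of_nonneg_of_nonpos (haPos c).le ?_
            refine Real.log_nonpos (le_trans (htpos n).le (le_max_right _ _)) ?_
            exact max_le (MAPaux.Q_le_one hθΘ c) (htle1 n)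
        calc FA n θ ≤ ∑ c, if c = c0 then a c0 * Real.log (((n:ℝ)+1)⁻¹) else 0 :=
              Finset.sum_le_sum fun c _ => hterm c
          _ = a c0 * Real.log (((n:ℝ)+1)⁻¹) := by
              rw [Finset.sum_ite_eq' Finset.univ c0 (fun _ => a c0 * Real.log (((n:ℝ)+1)⁻¹))]
              simp
      rw [Real.log_inv] at hb1
      have h3 : |Astar| + 1 ≤ Real.log ((n:ℝ)+1) * a c0 := (div_le_iff₀ (haPos c0)).mp hlog
      have h4 := (hnc n).1
      have h5 : -|Astar| ≤ Astar := neg_abs_le Astar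
      nlinarith
    have hRpos : ∀ k, 0 < ∑ l, θ.2.1 l * θ.2.2 l k := by
      by_contra hr
      push_neg at hr
      obtain ⟨k0, hk0⟩ := hr
      have hR0 : ∑ l, θ.2.1 l * θ.2.2 l k0 = 0 := le_antisymm hk0 (MAPaux.R_nonneg hθΘ k0)
      obtain ⟨n, hn⟩ := exists_nat_ge (Real.exp ((|Bstar| + 1) / b k0))
      have hlog : (|Bstar| + 1) / b k0 ≤ Real.log ((n:ℝ)+1) := by
        rw [← Real.log_exp ((|Bstar| + 1) / b k0)]
        refine Real.log_le_log (Real.exp_pos _) (by linarith)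
      have hb1 : FB n θ ≤ b k0 * Real.log (((n:ℝ)+1)⁻¹) := by
        have hterm : ∀ k, b k * Real.log (max (∑ l, θ.2.1 l * θ.2.2 l k) (((n:ℝ)+1)⁻¹))
            ≤ if k = k0 then b k0 * Real.log (((n:ℝ)+1)⁻¹) else 0 := by
          intro k
          by_cases hkk : k = k0
          · subst hkk
            rw [if_pos rfl, hR0, max_eq_right (htpos n).le]
          · rw [if_neg hkk]
            refine mul_nonpos_of_nonneg_of_nonpos (hbPos k).le ?_
            refine Real.log_nonpos (le_trans (htpos n).le (le_max_right _ _)) ?_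
            exact max_le (MAPaux.R_le_one hθΘ k) (htle1 n)
        calc FB n θ ≤ ∑ k, if k = k0 then b k0 * Real.log (((n:ℝ)+1)⁻¹) else 0 :=
              Finset.sum_le_sum fun k _ => hterm k
          _ = b k0 * Real.log (((n:ℝ)+1)⁻¹) := by
              rw [Finset.sum_ite_eq' Finset.univ k0 (fun _ => b k0 * Real.log (((n:ℝ)+1)⁻¹))]
              simp
      rw [Real.log_inv] at hb1
      have h3 : |Bstar| + 1 ≤ Real.log ((n:ℝ)+1) * b k0 := (div_le_iff₀ (hbPos k0)).mp hlog
      have h4 := (hnc n).2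
      have h5 : -|Bstar| ≤ Bstar := neg_abs_le Bstar
      nlinarith
    -- Step 3: collapse max for n large
    have hne : (Finset.univ : Finset (Fin L × Fin K)).Nonempty := Finset.univ_nonempty
    have hneK : (Finset.univ : Finset (Fin K)).Nonempty := Finset.univ_nonempty
    set qm : ℝ := Finset.univ.inf' hne (fun c : Fin L × Fin K => θ.1 c.1 * θ.2.2 c.1 c.2) with hqm
    set rm : ℝ := Finset.univ.inf' hneK (fun k => ∑ l, θ.2.1 l * θ.2.2 l k) with hrm
    have hqmpos : 0 < qm := Finset.lt_inf'_iff hne |>.mpr fun c _ => hQpos c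
    have hrmpos : 0 < rm := Finset.lt_inf'_iff hneK |>.mpr fun k _ => hRpos k
    set m : ℝ := min qm rm with hm
    have hmpos : 0 < m := lt_min hqmpos hrmpos
    obtain ⟨n, hn⟩ := exists_nat_ge (1/m)
    have hinv : ((n:ℝ)+1)⁻¹ ≤ m := by
      have h1 : 1/m ≤ (n:ℝ)+1 := by linarith
      have h2 := inv_anti₀ (by positivity : (0:ℝ) < 1/m) h1
      rwa [one_div, inv_inv] at h2
    have hAcoll : FA n θ = ∑ c, a c * Real.log (θ.1 c.1 * θ.2.2 c.1 c.2) := by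
      refine Finset.sum_congr rfl fun c _ => ?_
      rw [max_eq_left (le_trans hinv (le_trans (min_le_left _ _)
        (Finset.inf'_le _ (Finset.mem_univ c))))]
    have hBcoll : FB n θ = ∑ k, b k * Real.log (∑ l, θ.2.1 l * θ.2.2 l k) := by
      refine Finset.sum_congr rfl fun k _ => ?_
      rw [max_eq_left (le_trans hinv (le_trans (min_le_right _ _)
        (Finset.inf'_le _ (Finset.mem_univ k))))]
    have hA := (hnc n).1
    have hB := (hnc n).2
    rw [hAcoll] at hA
    rw [hBcoll] at hB
    have hident := MAPaux.ident hL πstar π'star φstar hπ hπ' hφ hrank θ hθΘ hQpos hRpos hA hB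
    rw [hident] at hθd
    simp only [Set.mem_setOf_eq, dist_self] at hθd
    linarith
  obtain ⟨tset, htset⟩ := hScpt.elim_finite_subcover U hUopen hcover
  by_cases hSne : S.Nonempty
  · set nstar : ℕ := tset.sup id with hnstar
    have hcov2 : S ⊆ U nstar := by
      intro θ hθ
      obtain ⟨n, hn, hθn⟩ := Set.mem_iUnion₂.mp (htset hθ)
      have hle : n ≤ nstar := Finset.le_sup (f := id) hn
      rcases hθn with h | h
      · exact Or.inl (lt_of_le_of_lt (hmonoA hle θ) h)
      · exact Or.inr (lt_of_le_of_lt (hmonoB hle θ) h)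
    set G : (Fin L → ℝ) × (Fin L → ℝ) × (Fin L → Fin K → ℝ) → ℝ :=
      fun θ => max (Astar - FA nstar θ) (Bstar - FB nstar θ) with hG
    have hGcont : Continuous G := (continuous_const.sub (hFAcont nstar)).max
      (continuous_const.sub (hFBcont nstar))
    obtain ⟨θ0, hθ0S, hθ0min⟩ := hScpt.exists_isMinOn hSne hGcont.continuousOn
    have hη : 0 < G θ0 := by
      rcases hcov2 hθ0S with h | h
      · exact lt_max_of_lt_left (by linarith)
      · exact lt_max_of_lt_right (by linarith)
    refine ⟨((nstar:ℝ)+1)⁻¹, G θ0, htpos nstar, htle1 nstar, hη, ?_⟩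
    intro θ hθΘ hθd
    have hθS : θ ∈ S := ⟨hθΘ, hθd⟩
    have hmin := isMinOn_iff.mp hθ0min θ hθS
    rcases le_max_iff.mp hmin with h | h
    · exact Or.inl (by linarith)
    · exact Or.inr (by linarith)
  · refine ⟨1, 1, one_pos, le_rfl, one_pos, ?_⟩
    intro θ hθΘ hθd
    exact absurd ⟨hθΘ, hθd⟩ (Set.not_nonempty_iff_eq_empty.mp hSne ▸ Set.notMem_empty θ)

lemma MAPaux.chisq_bound {β : Type*} [Fintype β] (P b : β → ℝ) (hP : ∀ u, 0 < P u)
    (hb : ∀ u, 0 < b u) (hsP : ∑ u, P u = 1) (hsb : ∑ u, b u = 1)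
    (bmin E : ℝ) (hbmin : 0 < bmin) (hbminle : ∀ u, bmin ≤ b u)
    (hdev : ∑ u, (P u - b u)^2 ≤ E) :
    ∑ u, P u * (Real.log (P u) - Real.log (b u)) ≤ E / bmin := by
  have step1 : ∀ u, P u * (Real.log (P u) - Real.log (b u)) ≤ (P u - b u)^2 / b u + (P u - b u) := by
    intro u
    have h1 : Real.log (P u) - Real.log (b u) = Real.log (P u / b u) := by
      rw [Real.log_div (hP u).ne' (hb u).ne']
    rw [h1]
    have h2 : Real.log (P u / b u) ≤ P u / b u - 1 :=
      Real.log_le_sub_one_of_pos (div_pos (hP u) (hb u))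
    have h3 : P u * Real.log (P u / b u) ≤ P u * (P u / b u - 1) :=
      mul_le_mul_of_nonneg_left h2 (hP u).le
    have h4 : P u * (P u / b u - 1) = (P u - b u)^2 / b u + (P u - b u) := by
      have hbne : b u ≠ 0 := (hb u).ne'
      field_simp
      ring
    linarith
  calc ∑ u, P u * (Real.log (P u) - Real.log (b u))
      ≤ ∑ u, ((P u - b u)^2 / b u + (P u - b u)) := Finset.sum_le_sum fun u _ => step1 u
    _ = ∑ u, (P u - b u)^2 / b u := by
        rw [Finset.sum_add_distrib, Finset.sum_sub_distrib, hsP, hsb]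
        ring
    _ ≤ ∑ u, (P u - b u)^2 / bmin := by
        refine Finset.sum_le_sum fun u _ => ?_
        exact div_le_div_of_nonneg_left (sq_nonneg _) hbmin (hbminle u)
    _ = (∑ u, (P u - b u)^2) / bmin := by rw [Finset.sum_div]
    _ ≤ E / bmin := by gcongr

lemma MAPaux.generic_bound {β : Type*} [Fintype β] (P q b : β → ℝ) (hP : ∀ u, 0 < P u)
    (hq : ∀ u, 0 < q u) (hb : ∀ u, 0 < b u) (hsP : ∑ u, P u = 1) (hsq : ∑ u, q u ≤ 1)
    (hsb : ∑ u, b u = 1) (bmin E : ℝ) (hbmin : 0 < bmin) (hbminle : ∀ u, bmin ≤ b u)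
    (hdev : ∑ u, (P u - b u)^2 ≤ E) :
    ∑ u, P u * (Real.log (q u) - Real.log (b u)) ≤ E / bmin := by
  have h1 : ∑ u, P u * (Real.log (q u) - Real.log (P u)) ≤ 0 := by
    have := MAPaux.gibbs_le P q hP hq
    linarith [hsP ▸ this, hsq]
  have h2 := MAPaux.chisq_bound P b hP hb hsP hsb bmin E hbmin hbminle hdev
  have h3 : ∑ u, P u * (Real.log (q u) - Real.log (b u))
      = (∑ u, P u * (Real.log (q u) - Real.log (P u)))
        + ∑ u, P u * (Real.log (P u) - Real.log (b u)) := by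
    rw [← Finset.sum_add_distrib]
    exact Finset.sum_congr rfl fun u _ => by ring
  linarith

lemma MAPaux.deficient_bound {β : Type*} [Fintype β] (P q a : β → ℝ)
    (t η ρ amin Ca Astar : ℝ)
    (hq : ∀ u, 0 < q u) (hq1 : ∀ u, q u ≤ 1) (ha : ∀ u, 0 < a u)
    (haminpos : 0 < amin) (hamin : ∀ u, amin ≤ a u)
    (hdev : ∀ u, |P u - a u| ≤ ρ) (hρ : 0 < ρ) (hs : ρ / amin ≤ 1/2)
    (hCa : Ca = ∑ u, |Real.log (a u)|) (hAstar : Astar = ∑ u, a u * Real.log (a u))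
    (hF : ∑ u, a u * Real.log (max (q u) t) ≤ Astar - η) (hη : 0 < η)
    (hρD : ρ * (|Astar| / amin + Ca) ≤ η/4) :
    ∑ u, P u * (Real.log (q u) - Real.log (a u)) ≤ -(η/4) := by
  set s : ℝ := ρ / amin with hsdef
  have hs0 : 0 ≤ s := by positivity
  -- upper bound on ∑ P log q
  have hup : ∑ u, P u * Real.log (q u) ≤ (1 - s) * (Astar - η) := by
    have hterm : ∀ u, P u * Real.log (q u) ≤ ((1 - s) * a u) * Real.log (q u) := by
      intro u
      have hlogle : Real.log (q u) ≤ 0 := Real.log_nonpos (hq u).le (hq1 u)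
      have hPge : (1 - s) * a u ≤ P u := by
        have h1 : a u - ρ ≤ P u := by
          have := abs_le.mp (hdev u); linarith [this.1]
        have h2 : s * amin ≤ s * a u := mul_le_mul_of_nonneg_left (hamin u) hs0
        have h3 : s * amin = ρ := by rw [hsdef, div_mul_cancel₀ _ haminpos.ne']
        nlinarith
      exact mul_le_mul_of_nonpos_right hPge hlogle
    have hsum2 : ∑ u, ((1 - s) * a u) * Real.log (q u)
        = (1 - s) * ∑ u, a u * Real.log (q u) := by
      rw [Finset.mul_sum]; exact Finset.sum_congr rfl fun u _ => by ring
    have hAq : ∑ u, a u * Real.log (q u) ≤ Astar - η := by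
      refine le_trans (Finset.sum_le_sum fun u _ => ?_) hF
      exact mul_le_mul_of_nonneg_left
        (Real.log_le_log (hq u) (le_max_left _ _)) (ha u).le
    calc ∑ u, P u * Real.log (q u) ≤ ∑ u, ((1 - s) * a u) * Real.log (q u) :=
          Finset.sum_le_sum fun u _ => hterm u
      _ = (1 - s) * ∑ u, a u * Real.log (q u) := hsum2
      _ ≤ (1 - s) * (Astar - η) := mul_le_mul_of_nonneg_left hAq (by linarith)
  -- lower bound on ∑ P log a
  have hlow : Astar - ρ * Ca ≤ ∑ u, P u * Real.log (a u) := by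
    have hterm : ∀ u, a u * Real.log (a u) - ρ * |Real.log (a u)| ≤ P u * Real.log (a u) := by
      intro u
      have h1 : P u * Real.log (a u) - a u * Real.log (a u) = (P u - a u) * Real.log (a u) := by ring
      have h2 : -(ρ * |Real.log (a u)|) ≤ (P u - a u) * Real.log (a u) := by
        have h3 : |(P u - a u) * Real.log (a u)| ≤ ρ * |Real.log (a u)| := by
          rw [abs_mul]
          exact mul_le_mul_of_nonneg_right (hdev u) (abs_nonneg _)
        linarith [neg_abs_le ((P u - a u) * Real.log (a u))]
      linarith
    calc Astar - ρ * Ca = ∑ u, (a u * Real.log (a u) - ρ * |Real.log (a u)|) := by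
          rw [Finset.sum_sub_distrib, ← hAstar, ← Finset.mul_sum, ← hCa]
      _ ≤ ∑ u, P u * Real.log (a u) := Finset.sum_le_sum fun u _ => hterm u
  have hAabs : -|Astar| ≤ Astar := neg_abs_le Astar
  have hsplit : ∑ u, P u * (Real.log (q u) - Real.log (a u))
      = (∑ u, P u * Real.log (q u)) - ∑ u, P u * Real.log (a u) := by
    rw [← Finset.sum_sub_distrib]
    exact Finset.sum_congr rfl fun u _ => by ring
  rw [hsplit]
  have hsA : - (s * Astar) ≤ s * |Astar| := by nlinarith
  have hρA : s * |Astar| = ρ * (|Astar| / amin) := by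
    rw [hsdef]; field_simp
  have hsη : s * η ≤ η / 2 := by nlinarith
  have hfinal : (1 - s) * (Astar - η) - (Astar - ρ * Ca) ≤ -(η/4) := by
    have hexp : (1 - s) * (Astar - η) - (Astar - ρ * Ca)
        = -(s * Astar) - η + s * η + ρ * Ca := by ring
    rw [hexp]
    have h6 : ρ * (|Astar| / amin) + ρ * Ca ≤ η / 4 := by
      have : ρ * (|Astar| / amin + Ca) = ρ * (|Astar| / amin) + ρ * Ca := by ring
      linarith [hρD, this ▸ hρD]
    linarith [hsA, hρA ▸ hsA]
  linarith

lemma MAPaux.deterministic {L K N N' : ℕ} (hL : 0 < L) (hK : 0 < K)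
    (hN : 0 < N) (hN' : 0 < N')
    (πstar π'star : Fin L → ℝ) (φstar : Fin L → Fin K → ℝ)
    (hπ : openSimplex πstar) (hπ' : openSimplex π'star) (hφ : ∀ l, openSimplex (φstar l))
    (p : (Fin L → ℝ) × (Fin L → ℝ) × (Fin L → Fin K → ℝ) → ℝ)
    (hppos : ∀ θ ∈ paramSpace L K, 0 < p θ)
    (pmin pmax : ℝ) (hpmin : 0 < pmin)
    (hplo : ∀ θ ∈ paramSpace L K, pmin ≤ p θ) (hphi : ∀ θ ∈ paramSpace L K, p θ ≤ pmax)
    (ε t η : ℝ) (hε : 0 < ε) (ht : 0 < t) (hη : 0 < η)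
    (hdef : ∀ θ ∈ paramSpace L K, ε ≤ dist θ (πstar, π'star, φstar) →
      (∑ c : Fin L × Fin K, (πstar c.1 * φstar c.1 c.2) * Real.log (max (θ.1 c.1 * θ.2.2 c.1 c.2) t)
        ≤ (∑ c : Fin L × Fin K, (πstar c.1 * φstar c.1 c.2) * Real.log (πstar c.1 * φstar c.1 c.2)) - η)
      ∨ (∑ k, (∑ l, π'star l * φstar l k) * Real.log (max (∑ l, θ.2.1 l * θ.2.2 l k) t)
        ≤ (∑ k, (∑ l, π'star l * φstar l k) * Real.log (∑ l, π'star l * φstar l k)) - η))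
    (amin bmin ρ T : ℝ)
    (haminpos : 0 < amin) (hbminpos : 0 < bmin)
    (hamin : ∀ c : Fin L × Fin K, amin ≤ πstar c.1 * φstar c.1 c.2)
    (hbmin : ∀ k, bmin ≤ ∑ l, π'star l * φstar l k)
    (hρ : 0 < ρ) (hρa : ρ / amin ≤ 1/2) (hρb : ρ / bmin ≤ 1/2)
    (hρDa : ρ * (|∑ c : Fin L × Fin K, (πstar c.1 * φstar c.1 c.2) * Real.log (πstar c.1 * φstar c.1 c.2)| / amin
       + ∑ c : Fin L × Fin K, |Real.log (πstar c.1 * φstar c.1 c.2)|) ≤ η/4)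
    (hρDb : ρ * (|∑ k, (∑ l, π'star l * φstar l k) * Real.log (∑ l, π'star l * φstar l k)| / bmin
       + ∑ k, |Real.log (∑ l, π'star l * φstar l k)|) ≤ η/4)
    (hT : 0 < T)
    (Cp : ℝ) (hCp : Real.log pmax - Real.log pmin ≤ Cp)
    (hNρ : T / N < ρ^2) (hN'ρ : T / N' < ρ^2)
    (hNbig : 4 * (Cp + T / bmin) < N * η) (hN'big : 4 * (Cp + T / amin) < N' * η)
    (ω : (Fin N → Fin L × Fin K) × (Fin N' → Fin K))
    (hE1 : ∑ c : Fin L × Fin K,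
      (((Finset.univ.filter (fun i => ω.1 i = c)).card : ℝ) / N - πstar c.1 * φstar c.1 c.2)^2 ≤ T / N)
    (hE2 : ∑ k, (((Finset.univ.filter (fun j => ω.2 j = k)).card : ℝ) / N'
      - ∑ l, π'star l * φstar l k)^2 ≤ T / N')
    (θhat : (Fin L → ℝ) × (Fin L → ℝ) × (Fin L → Fin K → ℝ)) (hθhat : θhat ∈ paramSpace L K)
    (hmax : ∀ θ ∈ paramSpace L K, posteriorScore p ω θ ≤ posteriorScore p ω θhat) :
    dist θhat (πstar, π'star, φstar) < ε := by
  by_contra hcon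
  push_neg at hcon
  set a : Fin L × Fin K → ℝ := fun c => πstar c.1 * φstar c.1 c.2 with ha
  set b : Fin K → ℝ := fun k => ∑ l, π'star l * φstar l k with hb
  have haPos : ∀ c, 0 < a c := fun c => mul_pos (hπ.1 c.1) ((hφ c.1).1 c.2)
  have hbPos : ∀ k, 0 < b k := fun k => lt_of_lt_of_le hbminpos (hbmin k)
  have hθstarmem : (πstar, π'star, φstar) ∈ paramSpace L K :=
    ⟨⟨fun i => (hπ.1 i).le, hπ.2⟩, ⟨fun i => (hπ'.1 i).le, hπ'.2⟩,
      fun l => ⟨fun k => ((hφ l).1 k).le, (hφ l).2⟩⟩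
  have hNR : (0:ℝ) < N := Nat.cast_pos.mpr hN
  have hN'R : (0:ℝ) < N' := Nat.cast_pos.mpr hN'
  set Pc : Fin L × Fin K → ℝ :=
    fun c => ((Finset.univ.filter (fun i => ω.1 i = c)).card : ℝ) / N with hPc
  set Qk : Fin K → ℝ :=
    fun k => ((Finset.univ.filter (fun j => ω.2 j = k)).card : ℝ) / N' with hQk
  have hPdev : ∀ c, |Pc c - a c| ≤ ρ := by
    intro c
    have h1 : (Pc c - a c)^2 ≤ T / N :=
      le_trans (Finset.single_le_sum (f := fun c => (Pc c - a c)^2)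
        (fun c _ => sq_nonneg _) (Finset.mem_univ c)) hE1
    have h2 : (Pc c - a c)^2 < ρ^2 := lt_of_le_of_lt h1 hNρ
    by_contra hab
    push_neg at hab
    nlinarith [abs_nonneg (Pc c - a c), sq_abs (Pc c - a c)]
  have hQdev : ∀ k, |Qk k - b k| ≤ ρ := by
    intro k
    have h1 : (Qk k - b k)^2 ≤ T / N' :=
      le_trans (Finset.single_le_sum (f := fun k => (Qk k - b k)^2)
        (fun k _ => sq_nonneg _) (Finset.mem_univ k)) hE2
    have h2 : (Qk k - b k)^2 < ρ^2 := lt_of_le_of_lt h1 hN'ρ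
    by_contra hab
    push_neg at hab
    nlinarith [abs_nonneg (Qk k - b k), sq_abs (Qk k - b k)]
  have hρhalf_a : ρ ≤ amin / 2 := by
    have := (div_le_iff₀ haminpos).mp hρa; linarith
  have hρhalf_b : ρ ≤ bmin / 2 := by
    have := (div_le_iff₀ hbminpos).mp hρb; linarith
  have hPpos : ∀ c, 0 < Pc c := by
    intro c
    have h1 := (abs_le.mp (hPdev c)).1
    have h2 : amin ≤ a c := hamin c
    linarith
  have hQpos : ∀ k, 0 < Qk k := by
    intro k
    have h1 := (abs_le.mp (hQdev k)).1
    have h2 : bmin ≤ b k := hbmin k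
    linarith
  have hPsum : ∑ c, Pc c = 1 := by
    have h1 : ∑ i : Fin N, (1:ℝ) = ∑ c : Fin L × Fin K,
        ((Finset.univ.filter (fun i => ω.1 i = c)).card : ℝ) * 1 :=
      MAPaux.sum_comp_count (fun i => ω.1 i) (fun _ => (1:ℝ))
    simp only [mul_one, Finset.sum_const, Finset.card_univ, Fintype.card_fin,
      nsmul_eq_mul, smul_eq_mul] at h1
    simp only [hPc]
    rw [← Finset.sum_div, ← h1]
    field_simp
  have hQsum : ∑ k, Qk k = 1 := by
    have h1 : ∑ j : Fin N', (1:ℝ) = ∑ k : Fin K,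
        ((Finset.univ.filter (fun j => ω.2 j = k)).card : ℝ) * 1 :=
      MAPaux.sum_comp_count (fun j => ω.2 j) (fun _ => (1:ℝ))
    simp only [mul_one, Finset.sum_const, Finset.card_univ, Fintype.card_fin,
      nsmul_eq_mul, smul_eq_mul] at h1
    simp only [hQk]
    rw [← Finset.sum_div, ← h1]
    field_simp
  have hexists : ∀ c : Fin L × Fin K, ∃ i, ω.1 i = c := by
    intro c
    have h1 : (Finset.univ.filter (fun i => ω.1 i = c)).Nonempty := by
      rw [← Finset.card_pos]
      by_contra h
      have hcard : (Finset.univ.filter (fun i => ω.1 i = c)).card = 0 :=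
        Nat.eq_zero_of_not_pos h
      have h2 := hPpos c
      have h3 : Pc c = 0 := by simp only [hPc, hcard, Nat.cast_zero, zero_div]
      linarith
    obtain ⟨i, hi⟩ := h1
    exact ⟨i, (Finset.mem_filter.mp hi).2⟩
  have hexistsK : ∀ k : Fin K, ∃ j, ω.2 j = k := by
    intro k
    have h1 : (Finset.univ.filter (fun j => ω.2 j = k)).Nonempty := by
      rw [← Finset.card_pos]
      by_contra h
      have hcard : (Finset.univ.filter (fun j => ω.2 j = k)).card = 0 :=
        Nat.eq_zero_of_not_pos h
      have h2 := hQpos k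
      have h3 : Qk k = 0 := by simp only [hQk, hcard, Nat.cast_zero, zero_div]
      linarith
    obtain ⟨j, hj⟩ := h1
    exact ⟨j, (Finset.mem_filter.mp hj).2⟩
  -- score positivity
  have hscorestar : 0 < posteriorScore p ω (πstar, π'star, φstar) := by
    rw [posteriorScore]
    refine mul_pos (mul_pos (hppos _ hθstarmem) (Finset.prod_pos fun i _ => ?_))
      (Finset.prod_pos fun j _ => ?_)
    · exact haPos (ω.1 i)
    · exact hbPos (ω.2 j)
  have hscorehat : 0 < posteriorScore p ω θhat :=
    lt_of_lt_of_le hscorestar (hmax _ hθstarmem)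
  have hprodQne : (∏ i, θhat.1 (ω.1 i).1 * θhat.2.2 (ω.1 i).1 (ω.1 i).2) ≠ 0 := by
    intro h
    rw [posteriorScore] at hscorehat
    rw [h] at hscorehat
    simp at hscorehat
  have hprodRne : (∏ j, ∑ l, θhat.2.1 l * θhat.2.2 l (ω.2 j)) ≠ 0 := by
    intro h
    rw [posteriorScore] at hscorehat
    rw [h] at hscorehat
    simp at hscorehat
  have hQhatpos : ∀ c : Fin L × Fin K, 0 < θhat.1 c.1 * θhat.2.2 c.1 c.2 := by
    intro c
    obtain ⟨i, hi⟩ := hexists c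
    have h1 := Finset.prod_ne_zero_iff.mp hprodQne i (Finset.mem_univ i)
    rw [hi] at h1
    exact lt_of_le_of_ne (MAPaux.Q_nonneg hθhat c) (Ne.symm h1)
  have hRhatpos : ∀ k, 0 < ∑ l, θhat.2.1 l * θhat.2.2 l k := by
    intro k
    obtain ⟨j, hj⟩ := hexistsK k
    have h1 := Finset.prod_ne_zero_iff.mp hprodRne j (Finset.mem_univ j)
    rw [hj] at h1
    exact lt_of_le_of_ne (MAPaux.R_nonneg hθhat k) (Ne.symm h1)
  -- expansion of the log-score
  have hexpand : ∀ θ : (Fin L → ℝ) × (Fin L → ℝ) × (Fin L → Fin K → ℝ), θ ∈ paramSpace L K →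
      (∀ c : Fin L × Fin K, 0 < θ.1 c.1 * θ.2.2 c.1 c.2) →
      (∀ k, 0 < ∑ l, θ.2.1 l * θ.2.2 l k) →
      Real.log (posteriorScore p ω θ) = Real.log (p θ)
        + ∑ c : Fin L × Fin K, ((Finset.univ.filter (fun i => ω.1 i = c)).card : ℝ)
            * Real.log (θ.1 c.1 * θ.2.2 c.1 c.2)
        + ∑ k, ((Finset.univ.filter (fun j => ω.2 j = k)).card : ℝ)
            * Real.log (∑ l, θ.2.1 l * θ.2.2 l k) := by
    intro θ hθ hQ hR
    rw [posteriorScore]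
    rw [Real.log_mul (mul_ne_zero (hppos θ hθ).ne'
        (Finset.prod_pos fun i _ => hQ (ω.1 i)).ne')
        (Finset.prod_pos fun j _ => hR (ω.2 j)).ne',
      Real.log_mul (hppos θ hθ).ne' (Finset.prod_pos fun i _ => hQ (ω.1 i)).ne',
      Real.log_prod (fun i _ => (hQ (ω.1 i)).ne'),
      Real.log_prod (fun j _ => (hR (ω.2 j)).ne')]
    rw [MAPaux.sum_comp_count (fun i => ω.1 i)
      (fun c => Real.log (θ.1 c.1 * θ.2.2 c.1 c.2))]
    rw [MAPaux.sum_comp_count (fun j => ω.2 j)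
      (fun k => Real.log (∑ l, θ.2.1 l * θ.2.2 l k))]
  have hstar_exp := hexpand (πstar, π'star, φstar) hθstarmem (fun c => haPos c) (fun k => hbPos k)
  have hhat_exp := hexpand θhat hθhat hQhatpos hRhatpos
  have hlog := Real.log_le_log hscorestar (hmax _ hθstarmem)
  rw [hstar_exp, hhat_exp] at hlog
  -- prior bound
  have hprior : Real.log (p θhat) - Real.log (p (πstar, π'star, φstar)) ≤ Cp := by
    have h1 : Real.log (p θhat) ≤ Real.log pmax :=
      Real.log_le_log (hppos _ hθhat) (hphi _ hθhat)
    have h2 : Real.log pmin ≤ Real.log (p (πstar, π'star, φstar)) :=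
      Real.log_le_log hpmin (hplo _ hθstarmem)
    linarith
  -- count = total * frequency
  have hncP : ∀ c : Fin L × Fin K, ((Finset.univ.filter (fun i => ω.1 i = c)).card : ℝ)
      = (N:ℝ) * Pc c := by
    intro c; rw [hPc]; field_simp
  have hmcQ : ∀ k, ((Finset.univ.filter (fun j => ω.2 j = k)).card : ℝ) = (N':ℝ) * Qk k := by
    intro k; rw [hQk]; exact (mul_div_cancel₀ _ hN'R.ne').symm
  -- labeled difference as N * inner product
  have hlabdiff : (∑ c : Fin L × Fin K, ((Finset.univ.filter (fun i => ω.1 i = c)).card : ℝ)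
        * Real.log (θhat.1 c.1 * θhat.2.2 c.1 c.2))
      - (∑ c : Fin L × Fin K, ((Finset.univ.filter (fun i => ω.1 i = c)).card : ℝ)
        * Real.log (a c))
      = (N:ℝ) * ∑ c, Pc c * (Real.log (θhat.1 c.1 * θhat.2.2 c.1 c.2) - Real.log (a c)) := by
    rw [Finset.mul_sum, ← Finset.sum_sub_distrib]
    refine Finset.sum_congr rfl fun c _ => ?_
    rw [hncP c]; ring
  have hunlabdiff : (∑ k, ((Finset.univ.filter (fun j => ω.2 j = k)).card : ℝ)
        * Real.log (∑ l, θhat.2.1 l * θhat.2.2 l k))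
      - (∑ k, ((Finset.univ.filter (fun j => ω.2 j = k)).card : ℝ) * Real.log (b k))
      = (N':ℝ) * ∑ k, Qk k * (Real.log (∑ l, θhat.2.1 l * θhat.2.2 l k) - Real.log (b k)) := by
    rw [Finset.mul_sum, ← Finset.sum_sub_distrib]
    refine Finset.sum_congr rfl fun k _ => ?_
    rw [hmcQ k]; ring
  -- generic bounds
  have hgenB : ∑ k, Qk k * (Real.log (∑ l, θhat.2.1 l * θhat.2.2 l k) - Real.log (b k))
      ≤ (T/N') / bmin := by
    refine MAPaux.generic_bound Qk (fun k => ∑ l, θhat.2.1 l * θhat.2.2 l k) b hQpos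
      hRhatpos hbPos hQsum (le_of_eq (MAPaux.R_sum hθhat)) ?_ bmin (T/N') hbminpos hbmin hE2
    rw [hb]
    exact MAPaux.R_sum hθstarmem
  have hgenA : ∑ c, Pc c * (Real.log (θhat.1 c.1 * θhat.2.2 c.1 c.2) - Real.log (a c))
      ≤ (T/N) / amin := by
    refine MAPaux.generic_bound Pc (fun c : Fin L × Fin K => θhat.1 c.1 * θhat.2.2 c.1 c.2) a
      hPpos hQhatpos haPos hPsum (le_of_eq (MAPaux.Q_sum hθhat)) ?_ amin (T/N) haminpos hamin hE1
    rw [ha]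
    exact MAPaux.Q_sum hθstarmem
  -- case analysis
  rcases hdef θhat hθhat hcon with hdA | hdB
  · -- labeled deficient
    have hdefA : ∑ c, Pc c * (Real.log (θhat.1 c.1 * θhat.2.2 c.1 c.2) - Real.log (a c))
        ≤ -(η/4) := by
      refine MAPaux.deficient_bound Pc (fun c : Fin L × Fin K => θhat.1 c.1 * θhat.2.2 c.1 c.2) a
        t η ρ amin _ _ hQhatpos (fun c => MAPaux.Q_le_one hθhat c) haPos haminpos hamin
        hPdev hρ hρa rfl rfl ?_ hη ?_
      · exact hdA
      · exact hρDa
    have h1 : (N:ℝ) * ∑ c, Pc c * (Real.log (θhat.1 c.1 * θhat.2.2 c.1 c.2) - Real.log (a c))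
        ≤ (N:ℝ) * (-(η/4)) := mul_le_mul_of_nonneg_left hdefA hNR.le
    have h2 : (N':ℝ) * ∑ k, Qk k * (Real.log (∑ l, θhat.2.1 l * θhat.2.2 l k) - Real.log (b k))
        ≤ (N':ℝ) * ((T/N') / bmin) := mul_le_mul_of_nonneg_left hgenB hN'R.le
    have h3 : (N':ℝ) * ((T/N') / bmin) = T / bmin := by
      rw [div_right_comm, mul_div_cancel₀ _ hN'R.ne']
    rw [h3] at h2
    rw [← hlabdiff] at h1
    rw [← hunlabdiff] at h2
    nlinarith [hlog, hprior, h1, h2, hNbig]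
  · -- unlabeled deficient
    have hdefB : ∑ k, Qk k * (Real.log (∑ l, θhat.2.1 l * θhat.2.2 l k) - Real.log (b k))
        ≤ -(η/4) := by
      refine MAPaux.deficient_bound Qk (fun k => ∑ l, θhat.2.1 l * θhat.2.2 l k) b
        t η ρ bmin _ _ hRhatpos (fun k => MAPaux.R_le_one hθhat k) hbPos hbminpos hbmin
        hQdev hρ hρb rfl rfl ?_ hη ?_
      · exact hdB
      · exact hρDb
    have h1 : (N':ℝ) * ∑ k, Qk k * (Real.log (∑ l, θhat.2.1 l * θhat.2.2 l k) - Real.log (b k))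
        ≤ (N':ℝ) * (-(η/4)) := mul_le_mul_of_nonneg_left hdefB hN'R.le
    have h2 : (N:ℝ) * ∑ c, Pc c * (Real.log (θhat.1 c.1 * θhat.2.2 c.1 c.2) - Real.log (a c))
        ≤ (N:ℝ) * ((T/N) / amin) := mul_le_mul_of_nonneg_left hgenA hNR.le
    have h3 : (N:ℝ) * ((T/N) / amin) = T / amin := by
      rw [div_right_comm, mul_div_cancel₀ _ hNR.ne']
    rw [h3] at h2
    rw [← hlabdiff] at h2
    rw [← hunlabdiff] at h1
    nlinarith [hlog, hprior, h1, h2, hN'big]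

lemma MAPaux.w_total {M : ℕ} {β : Type*} [Fintype β] [DecidableEq β] (b : β → ℝ)
    (hb1 : ∑ u, b u = 1) : ∑ z : Fin M → β, ∏ j, b (z j) = 1 := by
  rw [MAPaux.sum_pi_prod (fun _ u => b u)]
  simp [hb1]

lemma MAPaux.freq_expect {M : ℕ} {β : Type*} [Fintype β] [DecidableEq β] (hM : 0 < M)
    (a : β → ℝ) (ha0 : ∀ u, 0 ≤ a u) (ha1 : ∑ u, a u = 1) :
    ∑ y : Fin M → β, (∏ i, a (y i)) *
      (∑ c, (((Finset.univ.filter (fun i => y i = c)).card : ℝ) / M - a c)^2) ≤ 1 / M := by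
  have hMR : (0:ℝ) < M := Nat.cast_pos.mpr hM
  have hswap : ∑ y : Fin M → β, (∏ i, a (y i)) *
      (∑ c, (((Finset.univ.filter (fun i => y i = c)).card : ℝ) / M - a c)^2)
     = ∑ c, ∑ y : Fin M → β, (∏ i, a (y i)) *
      ((((Finset.univ.filter (fun i => y i = c)).card : ℝ) / M - a c)^2) := by
    rw [Finset.sum_comm]
    exact Finset.sum_congr rfl fun y _ => Finset.mul_sum _ _ _
  rw [hswap]
  have hper : ∀ c, ∑ y : Fin M → β, (∏ i, a (y i)) *
      ((((Finset.univ.filter (fun i => y i = c)).card : ℝ) / M - a c)^2)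
      = a c * (1 - a c) / M := by
    intro c
    have hpt : ∀ y : Fin M → β,
        ((((Finset.univ.filter (fun i => y i = c)).card : ℝ) / M - a c)^2)
        = (1/(M:ℝ))^2 * (∑ i, ((if y i = c then (1:ℝ) else 0) - a c))^2 := by
      intro y
      have hcard : ((Finset.univ.filter (fun i => y i = c)).card : ℝ)
          = ∑ i, (if y i = c then (1:ℝ) else 0) := by
        rw [Finset.card_filter]
        push_cast
        rfl
      have hsub : ∑ i, ((if y i = c then (1:ℝ) else 0) - a c)
          = (∑ i, (if y i = c then (1:ℝ) else 0)) - M * a c := by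
        rw [Finset.sum_sub_distrib]
        simp [Finset.sum_const, Finset.card_univ]
      rw [hsub, ← hcard]
      field_simp
    have h2 : ∑ y : Fin M → β, (∏ i, a (y i)) *
        ((((Finset.univ.filter (fun i => y i = c)).card : ℝ) / M - a c)^2)
        = (1/(M:ℝ))^2 * ∑ y : Fin M → β, (∏ i, a (y i)) *
          (∑ i, ((if y i = c then (1:ℝ) else 0) - a c))^2 := by
      rw [Finset.mul_sum]
      exact Finset.sum_congr rfl fun y _ => by rw [hpt y]; ring
    rw [h2, MAPaux.variance_bound a ha0 ha1 c]
    field_simp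
  rw [Finset.sum_congr rfl fun c _ => hper c]
  rw [← Finset.sum_div]
  rw [div_le_div_iff₀ hMR hMR]
  have h3 : ∑ c, a c * (1 - a c) ≤ 1 := by
    calc ∑ c, a c * (1 - a c) ≤ ∑ c, a c := by
          refine Finset.sum_le_sum fun c _ => ?_
          have h4 : a c ≤ 1 := by
            rw [← ha1]
            exact Finset.single_le_sum (fun u _ => ha0 u) (Finset.mem_univ c)
          nlinarith [ha0 c]
      _ = 1 := ha1
  nlinarith

lemma MAPaux.prod_split_left {A B : Type*} [Fintype A] [Fintype B] (g : A → ℝ) (h : B → ℝ)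
    (f : A → ℝ) :
    ∑ ω : A × B, (g ω.1 * h ω.2) * f ω.1 = (∑ y, g y * f y) * (∑ z, h z) := by
  rw [Fintype.sum_prod_type]
  rw [Finset.sum_mul]
  refine Finset.sum_congr rfl fun y _ => ?_
  rw [Finset.mul_sum]
  refine Finset.sum_congr rfl fun z _ => by ring

lemma MAPaux.prod_split_right {A B : Type*} [Fintype A] [Fintype B] (g : A → ℝ) (h : B → ℝ)
    (f : B → ℝ) :
    ∑ ω : A × B, (g ω.1 * h ω.2) * f ω.2 = (∑ y, g y) * (∑ z, h z * f z) := by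
  rw [Fintype.sum_prod_type]
  rw [Finset.sum_mul]
  refine Finset.sum_congr rfl fun y _ => ?_
  rw [Finset.mul_sum]
  refine Finset.sum_congr rfl fun z _ => by ring

lemma MAPaux.bad_measure {Ω : Type*} [Fintype Ω] [MeasurableSpace Ω] [MeasurableSingletonClass Ω]
    (μ : Measure Ω) (w : Ω → ℝ) (hw0 : ∀ ω, 0 ≤ w ω) (hμ : ∀ ω, μ {ω} = ENNReal.ofReal (w ω))
    (f : Ω → ℝ) (hf0 : ∀ ω, 0 ≤ f ω) (t : ℝ) (ht : 0 < t) (E : ℝ)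
    (hE : ∑ ω, w ω * f ω ≤ E) :
    μ {ω | ¬ (f ω ≤ t)} ≤ ENNReal.ofReal (E / t) := by
  classical
  have hset : {ω | ¬ (f ω ≤ t)} = ↑(Finset.univ.filter (fun ω => ¬ (f ω ≤ t))) := by
    ext ω; simp
  rw [hset, MAPaux.measure_finset μ w hw0 hμ]
  refine ENNReal.ofReal_le_ofReal ?_
  have hsub : Finset.univ.filter (fun ω => ¬ (f ω ≤ t)) ⊆
      Finset.univ.filter (fun ω => t ≤ f ω) := by
    intro x hx
    simp only [Finset.mem_filter, Finset.mem_univ, true_and] at *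
    exact (lt_of_not_ge hx).le
  calc ∑ ω ∈ Finset.univ.filter (fun ω => ¬ (f ω ≤ t)), w ω
      ≤ ∑ ω ∈ Finset.univ.filter (fun ω => t ≤ f ω), w ω :=
        Finset.sum_le_sum_of_subset_of_nonneg hsub (fun ω _ _ => hw0 ω)
    _ ≤ (∑ ω, w ω * f ω) / t := MAPaux.markov w f hw0 hf0 ht
    _ ≤ E / t := by gcongr


/-- Consistency of the MAP estimate. With `π*, π'*` in the open simplices,
row-wise open-simplex `φ*` of full rank `L`, and a continuous strictly positive prior
density `p` on the compact parameter space `Θ`, for every `ε, δ > 0` there are `N₀, N₀'`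
such that for all `N ≥ N₀`, `N' ≥ N₀'`: for labeled data `(Y_i, C_i)` i.i.d. with
`P(Y_i = l, C_i = k) = π*_l φ*_{lk}`, independent of unlabeled data `C'_j` i.i.d. with
`P(C'_j = k) = Σ_l π'*_l φ*_{lk}` (encoded by the canonical product measure `μ` on the
sample space), with probability at least `1 - δ` every maximizer of the posterior score
`G_{N,N'}` over `Θ` lies within `ε` of `(π*, π'*, φ*)`. -/
theorem map_estimate_consistent
    (L K : ℕ) (hL : 0 < L) (hK : 0 < K)
    (πstar π'star : Fin L → ℝ) (φstar : Fin L → Fin K → ℝ)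
    (hπ : openSimplex πstar) (hπ' : openSimplex π'star)
    (hφ : ∀ l, openSimplex (φstar l))
    (hrank : (Matrix.of φstar).rank = L)
    (p : (Fin L → ℝ) × (Fin L → ℝ) × (Fin L → Fin K → ℝ) → ℝ)
    (hpcont : ContinuousOn p (paramSpace L K))
    (hppos : ∀ θ ∈ paramSpace L K, 0 < p θ)
    (ε δ : ℝ) (hε : 0 < ε) (hδ : 0 < δ) :
    ∃ N₀ N₀' : ℕ, 0 < N₀ ∧ 0 < N₀' ∧
      ∀ (N N' : ℕ), N₀ ≤ N → N₀' ≤ N' →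
      ∀ μ : Measure ((Fin N → Fin L × Fin K) × (Fin N' → Fin K)),
        IsProbabilityMeasure μ →
        (∀ ω : (Fin N → Fin L × Fin K) × (Fin N' → Fin K),
          μ {ω} = ENNReal.ofReal
            ((∏ i, πstar (ω.1 i).1 * φstar (ω.1 i).1 (ω.1 i).2) *
              ∏ j, ∑ l, π'star l * φstar l (ω.2 j))) →
        ENNReal.ofReal (1 - δ) ≤
          μ {ω | ∀ θhat ∈ paramSpace L K,
            (∀ θ ∈ paramSpace L K, posteriorScore p ω θ ≤ posteriorScore p ω θhat) →
            dist θhat (πstar, π'star, φstar) < ε} := by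
    classical
  haveI : Nonempty (Fin L) := ⟨⟨0, hL⟩⟩
  haveI : Nonempty (Fin K) := ⟨⟨0, hK⟩⟩
  obtain ⟨t, η, ht, ht1, hη, hdef⟩ :=
    MAPaux.deficiency hL hK πstar π'star φstar hπ hπ' hφ hrank ε hε
  have hθstarmem : (πstar, π'star, φstar) ∈ paramSpace L K :=
    ⟨⟨fun i => (hπ.1 i).le, hπ.2⟩, ⟨fun i => (hπ'.1 i).le, hπ'.2⟩,
      fun l => ⟨fun k => ((hφ l).1 k).le, (hφ l).2⟩⟩
  -- prior bounds
  obtain ⟨θmin, hθminmem, hθminOn⟩ := (MAPaux.paramSpace_compact L K).exists_isMinOn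
    ⟨_, hθstarmem⟩ hpcont
  obtain ⟨θmax, hθmaxmem, hθmaxOn⟩ := (MAPaux.paramSpace_compact L K).exists_isMaxOn
    ⟨_, hθstarmem⟩ hpcont
  have hpminpos : 0 < p θmin := hppos _ hθminmem
  have hplo : ∀ θ ∈ paramSpace L K, p θmin ≤ p θ := fun θ hθ => isMinOn_iff.mp hθminOn θ hθ
  have hphi : ∀ θ ∈ paramSpace L K, p θ ≤ p θmax := fun θ hθ => isMaxOn_iff.mp hθmaxOn θ hθ
  set Cp : ℝ := Real.log (p θmax) - Real.log (p θmin) with hCpdef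
  -- minima of the true distributions
  obtain ⟨cmin, -, hcmin⟩ := Finset.exists_min_image Finset.univ
    (fun c : Fin L × Fin K => πstar c.1 * φstar c.1 c.2) Finset.univ_nonempty
  obtain ⟨kmin, -, hkmin⟩ := Finset.exists_min_image Finset.univ
    (fun k => ∑ l, π'star l * φstar l k) Finset.univ_nonempty
  set amin : ℝ := πstar cmin.1 * φstar cmin.1 cmin.2 with hamindef
  set bmin : ℝ := ∑ l, π'star l * φstar l kmin with hbmindef
  have haminpos : 0 < amin := mul_pos (hπ.1 cmin.1) ((hφ cmin.1).1 cmin.2)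
  have hbminpos : 0 < bmin :=
    Finset.sum_pos (fun l _ => mul_pos (hπ'.1 l) ((hφ l).1 kmin)) Finset.univ_nonempty
  have hamin : ∀ c : Fin L × Fin K, amin ≤ πstar c.1 * φstar c.1 c.2 :=
    fun c => hcmin c (Finset.mem_univ c)
  have hbmin : ∀ k, bmin ≤ ∑ l, π'star l * φstar l k := fun k => hkmin k (Finset.mem_univ k)
  -- deficiency constants
  set DA : ℝ := |∑ c : Fin L × Fin K,
      (πstar c.1 * φstar c.1 c.2) * Real.log (πstar c.1 * φstar c.1 c.2)| / amin
    + ∑ c : Fin L × Fin K, |Real.log (πstar c.1 * φstar c.1 c.2)| with hDAdef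
  set DB : ℝ := |∑ k, (∑ l, π'star l * φstar l k)
      * Real.log (∑ l, π'star l * φstar l k)| / bmin
    + ∑ k, |Real.log (∑ l, π'star l * φstar l k)| with hDBdef
  have hDA0 : 0 ≤ DA := add_nonneg (div_nonneg (abs_nonneg _) haminpos.le)
    (Finset.sum_nonneg fun c _ => abs_nonneg _)
  have hDB0 : 0 ≤ DB := add_nonneg (div_nonneg (abs_nonneg _) hbminpos.le)
    (Finset.sum_nonneg fun k _ => abs_nonneg _)
  set E : ℝ := max DA DB with hEdef
  have hE0 : 0 ≤ E := le_trans hDA0 (le_max_left _ _)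
  set ρ : ℝ := min (min (amin/2) (bmin/2)) (η/(4*(E+1))) with hρdef
  have hρpos : 0 < ρ := lt_min (lt_min (by linarith) (by linarith)) (by positivity)
  have hρa : ρ / amin ≤ 1/2 := by
    have h1 : ρ ≤ amin/2 := le_trans (min_le_left _ _) (min_le_left _ _)
    rw [div_le_iff₀ haminpos]
    linarith
  have hρb : ρ / bmin ≤ 1/2 := by
    have h1 : ρ ≤ bmin/2 := le_trans (min_le_left _ _) (min_le_right _ _)
    rw [div_le_iff₀ hbminpos]
    linarith
  have hρE : ρ ≤ η/(4*(E+1)) := min_le_right _ _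
  have hquarter : η/(4*(E+1)) * (E+1) = η/4 := by
    field_simp
  have hρDa : ρ * DA ≤ η/4 := by
    calc ρ * DA ≤ ρ * (E+1) := mul_le_mul_of_nonneg_left
          (le_trans (le_max_left _ DB) (by linarith)) hρpos.le
      _ ≤ η/(4*(E+1)) * (E+1) := mul_le_mul_of_nonneg_right hρE (by linarith)
      _ = η/4 := hquarter
  have hρDb : ρ * DB ≤ η/4 := by
    calc ρ * DB ≤ ρ * (E+1) := mul_le_mul_of_nonneg_left
          (le_trans (le_max_right DA _) (by linarith)) hρpos.le
      _ ≤ η/(4*(E+1)) * (E+1) := mul_le_mul_of_nonneg_right hρE (by linarith)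
      _ = η/4 := hquarter
  set T : ℝ := 2/δ with hTdef
  have hT : 0 < T := by positivity
  set NA : ℝ := 4*(Cp + T/bmin)/η with hNAdef
  set NB : ℝ := 4*(Cp + T/amin)/η with hNBdef
  refine ⟨⌈max (T/ρ^2) NA⌉₊ + 1, ⌈max (T/ρ^2) NB⌉₊ + 1, Nat.succ_pos _, Nat.succ_pos _, ?_⟩
  intro N N' hNN hNN' μ hμprob hμs
  have hN : 0 < N := lt_of_lt_of_le (Nat.succ_pos _) hNN
  have hN' : 0 < N' := lt_of_lt_of_le (Nat.succ_pos _) hNN'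
  have hNR : (0:ℝ) < N := Nat.cast_pos.mpr hN
  have hN'R : (0:ℝ) < N' := Nat.cast_pos.mpr hN'
  have hNgt : max (T/ρ^2) NA < (N:ℝ) := by
    have h1 : max (T/ρ^2) NA ≤ (⌈max (T/ρ^2) NA⌉₊ : ℝ) := Nat.le_ceil _
    have h2 : (⌈max (T/ρ^2) NA⌉₊ : ℝ) + 1 ≤ (N:ℝ) := by
      have := Nat.cast_le (α := ℝ) |>.mpr hNN
      push_cast at this
      linarith
    linarith
  have hN'gt : max (T/ρ^2) NB < (N':ℝ) := by
    have h1 : max (T/ρ^2) NB ≤ (⌈max (T/ρ^2) NB⌉₊ : ℝ) := Nat.le_ceil _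
    have h2 : (⌈max (T/ρ^2) NB⌉₊ : ℝ) + 1 ≤ (N':ℝ) := by
      have := Nat.cast_le (α := ℝ) |>.mpr hNN'
      push_cast at this
      linarith
    linarith
  have hNρ : T/(N:ℝ) < ρ^2 := by
    rw [div_lt_iff₀ hNR]
    have h1 : T/ρ^2 < (N:ℝ) := lt_of_le_of_lt (le_max_left _ _) hNgt
    rw [div_lt_iff₀ (by positivity)] at h1
    linarith
  have hN'ρ : T/(N':ℝ) < ρ^2 := by
    rw [div_lt_iff₀ hN'R]
    have h1 : T/ρ^2 < (N':ℝ) := lt_of_le_of_lt (le_max_left _ _) hN'gt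
    rw [div_lt_iff₀ (by positivity)] at h1
    linarith
  have hNbig : 4 * (Cp + T/bmin) < (N:ℝ) * η := by
    have h1 : NA < (N:ℝ) := lt_of_le_of_lt (le_max_right _ _) hNgt
    rw [hNAdef, div_lt_iff₀ hη] at h1
    linarith
  have hN'big : 4 * (Cp + T/amin) < (N':ℝ) * η := by
    have h1 : NB < (N':ℝ) := lt_of_le_of_lt (le_max_right _ _) hN'gt
    rw [hNBdef, div_lt_iff₀ hη] at h1
    linarith
  -- weights
  set w1 : (Fin N → Fin L × Fin K) → ℝ :=
    fun y => ∏ i, πstar (y i).1 * φstar (y i).1 (y i).2 with hw1def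
  set w2 : (Fin N' → Fin K) → ℝ := fun z => ∏ j, ∑ l, π'star l * φstar l (z j) with hw2def
  set w : (Fin N → Fin L × Fin K) × (Fin N' → Fin K) → ℝ :=
    fun ω => w1 ω.1 * w2 ω.2 with hwdef
  have hμs' : ∀ ω, μ {ω} = ENNReal.ofReal (w ω) := fun ω => hμs ω
  have hw10 : ∀ y, 0 ≤ w1 y := fun y => Finset.prod_nonneg fun i _ =>
    mul_nonneg (hπ.1 (y i).1).le ((hφ (y i).1).1 (y i).2).le
  have hw20 : ∀ z, 0 ≤ w2 z := fun z => Finset.prod_nonneg fun j _ =>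
    Finset.sum_nonneg fun l _ => mul_nonneg (hπ'.1 l).le ((hφ l).1 (z j)).le
  have hw0 : ∀ ω, 0 ≤ w ω := fun ω => mul_nonneg (hw10 ω.1) (hw20 ω.2)
  have ha1 : ∑ c : Fin L × Fin K, πstar c.1 * φstar c.1 c.2 = 1 := MAPaux.Q_sum hθstarmem
  have hb1 : ∑ k, ∑ l, π'star l * φstar l k = 1 := MAPaux.R_sum hθstarmem
  -- statistics
  set f1 : (Fin N → Fin L × Fin K) → ℝ := fun y => ∑ c : Fin L × Fin K,
    (((Finset.univ.filter (fun i => y i = c)).card : ℝ)/N - πstar c.1 * φstar c.1 c.2)^2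
    with hf1def
  set f2 : (Fin N' → Fin K) → ℝ := fun z => ∑ k,
    (((Finset.univ.filter (fun j => z j = k)).card : ℝ)/N' - ∑ l, π'star l * φstar l k)^2
    with hf2def
  have hf10 : ∀ y, 0 ≤ f1 y := fun y => Finset.sum_nonneg fun c _ => sq_nonneg _
  have hf20 : ∀ z, 0 ≤ f2 z := fun z => Finset.sum_nonneg fun k _ => sq_nonneg _
  -- expectations
  have hEf1 : ∑ ω : (Fin N → Fin L × Fin K) × (Fin N' → Fin K), w ω * f1 ω.1 ≤ 1/(N:ℝ) := by
    have hsplit : ∑ ω : (Fin N → Fin L × Fin K) × (Fin N' → Fin K), (w1 ω.1 * w2 ω.2) * f1 ω.1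
        = (∑ y, w1 y * f1 y) * (∑ z, w2 z) := MAPaux.prod_split_left w1 w2 f1
    have hw2tot : ∑ z, w2 z = 1 := MAPaux.w_total _ hb1
    have hfreq : ∑ y, w1 y * f1 y ≤ 1/(N:ℝ) :=
      MAPaux.freq_expect hN (fun c : Fin L × Fin K => πstar c.1 * φstar c.1 c.2)
        (fun c => mul_nonneg (hπ.1 c.1).le ((hφ c.1).1 c.2).le) ha1
    calc ∑ ω : (Fin N → Fin L × Fin K) × (Fin N' → Fin K), w ω * f1 ω.1
        = (∑ y, w1 y * f1 y) * (∑ z, w2 z) := hsplit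
      _ = ∑ y, w1 y * f1 y := by rw [hw2tot, mul_one]
      _ ≤ 1/(N:ℝ) := hfreq
  have hEf2 : ∑ ω : (Fin N → Fin L × Fin K) × (Fin N' → Fin K), w ω * f2 ω.2 ≤ 1/(N':ℝ) := by
    have hsplit : ∑ ω : (Fin N → Fin L × Fin K) × (Fin N' → Fin K), (w1 ω.1 * w2 ω.2) * f2 ω.2
        = (∑ y, w1 y) * (∑ z, w2 z * f2 z) := MAPaux.prod_split_right w1 w2 f2
    have hw1tot : ∑ y, w1 y = 1 := MAPaux.w_total _ ha1
    have hfreq : ∑ z, w2 z * f2 z ≤ 1/(N':ℝ) :=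
      MAPaux.freq_expect hN' (fun k => ∑ l, π'star l * φstar l k)
        (fun k => Finset.sum_nonneg fun l _ => mul_nonneg (hπ'.1 l).le ((hφ l).1 k).le) hb1
    calc ∑ ω : (Fin N → Fin L × Fin K) × (Fin N' → Fin K), w ω * f2 ω.2
        = (∑ y, w1 y) * (∑ z, w2 z * f2 z) := hsplit
      _ = ∑ z, w2 z * f2 z := by rw [hw1tot, one_mul]
      _ ≤ 1/(N':ℝ) := hfreq
  -- bad events
  have hbad1 : μ {ω : (Fin N → Fin L × Fin K) × (Fin N' → Fin K) | ¬ (f1 ω.1 ≤ T/N)}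
      ≤ ENNReal.ofReal (δ/2) := by
    have h1 := MAPaux.bad_measure μ w hw0 hμs' (fun ω => f1 ω.1) (fun ω => hf10 ω.1)
      (T/N) (by positivity) (1/(N:ℝ)) hEf1
    have h2 : (1/(N:ℝ))/(T/N) = δ/2 := by
      rw [hTdef]
      field_simp
    rwa [h2] at h1
  have hbad2 : μ {ω : (Fin N → Fin L × Fin K) × (Fin N' → Fin K) | ¬ (f2 ω.2 ≤ T/N')}
      ≤ ENNReal.ofReal (δ/2) := by
    have h1 := MAPaux.bad_measure μ w hw0 hμs' (fun ω => f2 ω.2) (fun ω => hf20 ω.2)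
      (T/N') (by positivity) (1/(N':ℝ)) hEf2
    have h2 : (1/(N':ℝ))/(T/N') = δ/2 := by
      rw [hTdef]
      field_simp
    rwa [h2] at h1
  -- inclusion of the good event
  have hincl : ∀ ω : (Fin N → Fin L × Fin K) × (Fin N' → Fin K),
      f1 ω.1 ≤ T/N → f2 ω.2 ≤ T/N' →
      ω ∈ {ω : (Fin N → Fin L × Fin K) × (Fin N' → Fin K) | ∀ θhat ∈ paramSpace L K,
        (∀ θ ∈ paramSpace L K, posteriorScore p ω θ ≤ posteriorScore p ω θhat) →
        dist θhat (πstar, π'star, φstar) < ε} := by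
    intro ω h1 h2 θhat hθhat hmax
    exact MAPaux.deterministic hL hK hN hN' πstar π'star φstar hπ hπ' hφ p hppos
      (p θmin) (p θmax) hpminpos hplo hphi ε t η hε ht hη hdef
      amin bmin ρ T haminpos hbminpos hamin hbmin hρpos hρa hρb hρDa hρDb hT
      Cp le_rfl hNρ hN'ρ hNbig hN'big ω h1 h2 θhat hθhat hmax
  -- combine measures
  set Good : Set ((Fin N → Fin L × Fin K) × (Fin N' → Fin K)) :=
    {ω | ∀ θhat ∈ paramSpace L K,
      (∀ θ ∈ paramSpace L K, posteriorScore p ω θ ≤ posteriorScore p ω θhat) →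
      dist θhat (πstar, π'star, φstar) < ε} with hGooddef
  set Bad1 : Set ((Fin N → Fin L × Fin K) × (Fin N' → Fin K)) :=
    {ω | ¬ (f1 ω.1 ≤ T/N)} with hBad1def
  set Bad2 : Set ((Fin N → Fin L × Fin K) × (Fin N' → Fin K)) :=
    {ω | ¬ (f2 ω.2 ≤ T/N')} with hBad2def
  have hcover : (Set.univ : Set ((Fin N → Fin L × Fin K) × (Fin N' → Fin K)))
      ⊆ Good ∪ (Bad1 ∪ Bad2) := by
    intro ω _
    by_cases h1 : f1 ω.1 ≤ T/N
    · by_cases h2 : f2 ω.2 ≤ T/N'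
      · exact Or.inl (hincl ω h1 h2)
      · exact Or.inr (Or.inr h2)
    · exact Or.inr (Or.inl h1)
  have hone : (1 : ENNReal) ≤ μ Good + ENNReal.ofReal δ := by
    have h1 : (1 : ENNReal) = μ Set.univ := (measure_univ (μ := μ)).symm
    have h2 : μ Set.univ ≤ μ (Good ∪ (Bad1 ∪ Bad2)) := measure_mono hcover
    have h3 : μ (Good ∪ (Bad1 ∪ Bad2)) ≤ μ Good + μ (Bad1 ∪ Bad2) := measure_union_le _ _
    have h4 : μ (Bad1 ∪ Bad2) ≤ μ Bad1 + μ Bad2 := measure_union_le _ _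
    have h5 : μ Bad1 + μ Bad2 ≤ ENNReal.ofReal (δ/2) + ENNReal.ofReal (δ/2) :=
      add_le_add hbad1 hbad2
    have h6 : ENNReal.ofReal (δ/2) + ENNReal.ofReal (δ/2) = ENNReal.ofReal δ := by
      rw [← ENNReal.ofReal_add (by linarith) (by linarith)]
      norm_num
    calc (1 : ENNReal) = μ Set.univ := h1
      _ ≤ μ (Good ∪ (Bad1 ∪ Bad2)) := h2
      _ ≤ μ Good + μ (Bad1 ∪ Bad2) := h3
      _ ≤ μ Good + (μ Bad1 + μ Bad2) := add_le_add le_rfl h4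
      _ ≤ μ Good + (ENNReal.ofReal (δ/2) + ENNReal.ofReal (δ/2)) := add_le_add le_rfl h5
      _ = μ Good + ENNReal.ofReal δ := by rw [h6]
  by_cases h1δ : 1 ≤ δ
  · have : ENNReal.ofReal (1 - δ) = 0 := ENNReal.ofReal_eq_zero.mpr (by linarith)
    rw [this]
    exact zero_le
  · push_neg at h1δ
    have h7 : ENNReal.ofReal (1 - δ) + ENNReal.ofReal δ = 1 := by
      rw [← ENNReal.ofReal_add (by linarith) (by linarith)]
      norm_num
    have h8 : ENNReal.ofReal (1 - δ) + ENNReal.ofReal δ ≤ μ Good + ENNReal.ofReal δ := by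
      rw [h7]; exact hone
    exact (ENNReal.add_le_add_iff_right ENNReal.ofReal_ne_top).mp h8
end

section
/- Let L, K be positive integers, let π*, π'* ∈ Δ^{L-1} (open simplex), let φ* be an L×K matrix whose rows lie in the open simplex Δ^{K-1}, and assume φ* has rank L. Fix a constant c > 0, and for θ = (π, π', φ) in Θ = Δ̄^{L-1} × Δ̄^{L-1} × (Δ̄^{K-1})^L define the population objective M(θ) = Σ_{l=1}^L π*_l log π_l + Σ_{l=1}^L Σ_{k=1}^K π*_l φ*_{lk} log φ_{lk} + c Σ_{k=1}^K (Σ_l π'*_l φ*_{lk}) log(Σ_l π'_l φ_{lk}), with values in [−∞, ∞) under the convention log 0 = −∞. Then M attains its maximum over Θ uniquely at θ* = (π*, π'*, φ*): M(θ) ≤ M(θ*) for all θ ∈ Θ, with equality if and only if θ = θ*. -/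
open Finset

/-- Extended-real logarithm with the convention `log 0 = -∞`. -/
noncomputable def elog (x : ℝ) : EReal :=
  if x = 0 then ⊥ else ((Real.log x : ℝ) : EReal)

/-- The population objective
`M(θ) = Σ_l π*_l log π_l + Σ_{l,k} π*_l φ*_{lk} log φ_{lk}
        + c Σ_k (Σ_l π'*_l φ*_{lk}) log (Σ_l π'_l φ_{lk})`,
valued in the extended reals with `log 0 = -∞`. -/
noncomputable def populationObjective (L K : ℕ)
    (πstar π'star : Fin L → ℝ) (φstar : Fin L → Fin K → ℝ) (c : ℝ)
    (θ : (Fin L → ℝ) × (Fin L → ℝ) × (Fin L → Fin K → ℝ)) : EReal :=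
  (∑ l, ((πstar l : ℝ) : EReal) * elog (θ.1 l)) +
  (∑ l, ∑ k, ((πstar l * φstar l k : ℝ) : EReal) * elog (θ.2.2 l k)) +
  ((c : ℝ) : EReal) * ∑ k, ((∑ l, π'star l * φstar l k : ℝ) : EReal) *
    elog (∑ l, θ.2.1 l * θ.2.2 l k)

open Matrix


lemma elog_of_pos {x : ℝ} (hx : 0 < x) : elog x = ((Real.log x : ℝ) : EReal) := by
  simp [elog, hx.ne']

lemma coe_sum_ereal {ι : Type*} [Fintype ι] (w : ι → ℝ) :
    ((∑ i, w i : ℝ) : EReal) = ∑ i, ((w i : ℝ) : EReal) :=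
  map_sum (⟨⟨Real.toEReal, EReal.coe_zero⟩, EReal.coe_add⟩ : ℝ →+ EReal) _ _

lemma sum_elog_coe {ι : Type*} [Fintype ι] (w a : ι → ℝ) (ha : ∀ i, 0 < a i) :
    (∑ i, ((w i : ℝ) : EReal) * elog (a i)) = ((∑ i, w i * Real.log (a i) : ℝ) : EReal) := by
  rw [coe_sum_ereal]
  exact Finset.sum_congr rfl fun i _ => by rw [elog_of_pos (ha i), ← EReal.coe_mul]

lemma real_gibbs {ι : Type*} [Fintype ι] (w a b : ι → ℝ)
    (hw : ∀ i, 0 < w i) (ha : ∀ i, 0 < a i) (hb : ∀ i, 0 < b i)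
    (hsum : ∑ i, w i * (b i / a i) ≤ ∑ i, w i) :
    (∑ i, w i * Real.log (b i)) ≤ (∑ i, w i * Real.log (a i)) ∧
    ((∑ i, w i * Real.log (b i)) = (∑ i, w i * Real.log (a i)) ↔ b = a) := by
  have key : ∀ i, w i * (Real.log (b i) - Real.log (a i)) ≤ w i * (b i / a i - 1) := by
    intro i
    exact mul_le_mul_of_nonneg_left (by
      rw [← Real.log_div (hb i).ne' (ha i).ne']
      exact Real.log_le_sub_one_of_pos (div_pos (hb i) (ha i))) (hw i).le
  have hsum2 : ∑ i, w i * (b i / a i - 1) ≤ 0 := by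
    have : ∑ i, w i * (b i / a i - 1) = (∑ i, w i * (b i / a i)) - ∑ i, w i := by
      rw [← Finset.sum_sub_distrib]
      exact Finset.sum_congr rfl fun i _ => by ring
    linarith
  have hle : ∑ i, w i * (Real.log (b i) - Real.log (a i)) ≤ 0 :=
    le_trans (Finset.sum_le_sum fun i _ => key i) hsum2
  have hdiff : ∑ i, w i * (Real.log (b i) - Real.log (a i)) =
      (∑ i, w i * Real.log (b i)) - ∑ i, w i * Real.log (a i) := by
    rw [← Finset.sum_sub_distrib]
    exact Finset.sum_congr rfl fun i _ => by ring
  constructor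
  · linarith [hdiff ▸ hle]
  constructor
  · intro heq
    have h0 : ∑ i, w i * (Real.log (b i) - Real.log (a i)) = 0 := by rw [hdiff, heq]; ring
    have h1 : ∑ i, w i * (Real.log (b i) - Real.log (a i)) =
        ∑ i, w i * (b i / a i - 1) := le_antisymm (Finset.sum_le_sum fun i _ => key i)
      (by linarith)
    have h2 := (Finset.sum_eq_sum_iff_of_le (fun i _ => key i)).1 h1
    funext i
    have h3 := h2 i (Finset.mem_univ i)
    by_contra hne
    have hba : b i / a i ≠ 1 := fun h => hne ((div_eq_one_iff_eq (ha i).ne').1 h)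
    have h4 := Real.log_lt_sub_one_of_pos (div_pos (hb i) (ha i)) hba
    rw [Real.log_div (hb i).ne' (ha i).ne'] at h4
    have hwi := hw i
    nlinarith [h4]
  · rintro rfl; rfl

lemma elog_gibbs {ι : Type*} [Fintype ι] (w a b : ι → ℝ)
    (hw : ∀ i, 0 < w i) (ha : ∀ i, 0 < a i) (hb : ∀ i, 0 ≤ b i)
    (hsum : ∑ i, w i * (b i / a i) ≤ ∑ i, w i) :
    (∑ i, ((w i : ℝ) : EReal) * elog (b i)) ≤ (∑ i, ((w i : ℝ) : EReal) * elog (a i)) ∧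
    ((∑ i, ((w i : ℝ) : EReal) * elog (b i)) = (∑ i, ((w i : ℝ) : EReal) * elog (a i)) ↔
      b = a) := by
  classical
  rw [sum_elog_coe w a ha]
  by_cases hzero : ∃ i, b i = 0
  · obtain ⟨i, hi⟩ := hzero
    have hbot : (∑ j, ((w j : ℝ) : EReal) * elog (b j)) = ⊥ := by
      rw [← Finset.add_sum_erase _ _ (Finset.mem_univ i)]
      have hib : ((w i : ℝ) : EReal) * elog (b i) = ⊥ := by
        rw [hi]; simp only [elog, if_pos rfl]
        exact EReal.coe_mul_bot_of_pos (hw i)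
      rw [hib, EReal.bot_add]
    rw [hbot]
    refine ⟨bot_le, ?_, ?_⟩
    · intro h; exact absurd h.symm (EReal.coe_ne_bot _)
    · rintro rfl; exact absurd hi (ha i).ne'
  · push_neg at hzero
    have hb' : ∀ i, 0 < b i := fun i => lt_of_le_of_ne (hb i) (Ne.symm (hzero i))
    rw [sum_elog_coe w b hb']
    obtain ⟨h1, h2⟩ := real_gibbs w a b hw ha hb' hsum
    exact ⟨EReal.coe_le_coe_iff.2 h1, by rw [EReal.coe_eq_coe_iff]; exact h2⟩

lemma ereal_add_split (x y : EReal) (x' y' : ℝ) (hx : x ≤ (x' : EReal)) (hy : y ≤ (y' : EReal)) :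
    x + y ≤ (x' : EReal) + (y' : EReal) ∧
    (x + y = (x' : EReal) + (y' : EReal) ↔ x = (x' : EReal) ∧ y = (y' : EReal)) := by
  refine ⟨add_le_add hx hy, ?_, ?_⟩
  · intro h
    induction x using EReal.rec with
    | bot => rw [EReal.bot_add] at h; exact absurd h.symm (by rw [← EReal.coe_add]; exact EReal.coe_ne_bot _)
    | top => exact absurd hx (by simp)
    | coe r =>
      induction y using EReal.rec with
      | bot => rw [EReal.add_bot] at h; exact absurd h.symm (by rw [← EReal.coe_add]; exact EReal.coe_ne_bot _)
      | top => exact absurd hy (by simp)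
      | coe s =>
        rw [← EReal.coe_add, ← EReal.coe_add, EReal.coe_eq_coe_iff] at h
        have hr : r ≤ x' := EReal.coe_le_coe_iff.1 hx
        have hs : s ≤ y' := EReal.coe_le_coe_iff.1 hy
        have hx0 : r = x' ∧ s = y' := ⟨by linarith, by linarith⟩
        exact ⟨by rw [hx0.1], by rw [hx0.2]⟩
  · rintro ⟨rfl, rfl⟩; rfl

lemma ereal_add3_split (x y z : EReal) (x' y' z' : ℝ)
    (hx : x ≤ (x' : EReal)) (hy : y ≤ (y' : EReal)) (hz : z ≤ (z' : EReal)) :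
    x + y + z ≤ (x' : EReal) + (y' : EReal) + (z' : EReal) ∧
    (x + y + z = (x' : EReal) + (y' : EReal) + (z' : EReal) ↔
      x = (x' : EReal) ∧ y = (y' : EReal) ∧ z = (z' : EReal)) := by
  have h1 := ereal_add_split x y x' y' hx hy
  have h2 := ereal_add_split (x + y) z (x' + y') z' (by rw [EReal.coe_add]; exact h1.1) hz
  rw [EReal.coe_add] at h2
  refine ⟨h2.1, ?_⟩
  rw [h2.2, h1.2, and_assoc]

lemma ereal_cmul (c : ℝ) (hc : 0 < c) (S : EReal) (r : ℝ) (h : S ≤ (r : EReal)) :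
    (c : EReal) * S ≤ ((c * r : ℝ) : EReal) ∧
    ((c : EReal) * S = ((c * r : ℝ) : EReal) ↔ S = (r : EReal)) := by
  induction S using EReal.rec with
  | bot =>
    rw [EReal.coe_mul_bot_of_pos hc]
    refine ⟨bot_le, ?_, ?_⟩
    · intro hh; exact absurd hh.symm (EReal.coe_ne_bot _)
    · intro hh; exact absurd hh.symm (EReal.coe_ne_bot _)
  | top => exact absurd h (by simp)
  | coe s =>
    rw [← EReal.coe_mul, EReal.coe_le_coe_iff, EReal.coe_eq_coe_iff, EReal.coe_eq_coe_iff]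
    have h' : s ≤ r := EReal.coe_le_coe_iff.1 h
    exact ⟨mul_le_mul_of_nonneg_left h' hc.le,
      fun hh => mul_left_cancel₀ hc.ne' hh, fun hh => by rw [hh]⟩

lemma vecMul_inj {L K : ℕ} (A : Matrix (Fin L) (Fin K) ℝ) (h : A.rank = L)
    (v : Fin L → ℝ) (hv : ∀ k, ∑ l, v l * A l k = 0) : v = 0 := by
  have hker : LinearMap.ker Aᵀ.mulVecLin = ⊥ := by
    have h1 := LinearMap.finrank_range_add_finrank_ker Aᵀ.mulVecLin
    have h2 : Module.finrank ℝ (LinearMap.range Aᵀ.mulVecLin) = L := by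
      rw [← Matrix.rank, Matrix.rank_transpose]; exact h
    rw [h2, Module.finrank_fin_fun] at h1
    have h3 : Module.finrank ℝ (LinearMap.ker Aᵀ.mulVecLin) = 0 := by omega
    exact Submodule.finrank_eq_zero.1 h3
  have hmem : v ∈ LinearMap.ker Aᵀ.mulVecLin := by
    rw [LinearMap.mem_ker]
    show Aᵀ.mulVec v = 0
    rw [Matrix.mulVec_transpose]
    funext k
    simpa [Matrix.vecMul, dotProduct] using hv k
  rw [hker] at hmem
  simpa using hmem

/-- The population objective `M` attains its maximum over
`Θ = Δ̄^{L-1} × Δ̄^{L-1} × (Δ̄^{K-1})^L` uniquely at `θ* = (π*, π'*, φ*)`. -/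
theorem population_objective_unique_max
    (L K : ℕ) (hL : 0 < L) (hK : 0 < K)
    (πstar π'star : Fin L → ℝ) (φstar : Fin L → Fin K → ℝ)
    (hπ : openSimplex πstar) (hπ' : openSimplex π'star)
    (hφ : ∀ l, openSimplex (φstar l))
    (hrank : (Matrix.of φstar).rank = L)
    (c : ℝ) (hc : 0 < c) :
    ∀ θ ∈ paramSpace L K,
      populationObjective L K πstar π'star φstar c θ ≤
        populationObjective L K πstar π'star φstar c (πstar, π'star, φstar) ∧
      (populationObjective L K πstar π'star φstar c θ =
          populationObjective L K πstar π'star φstar c (πstar, π'star, φstar) ↔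
        θ = (πstar, π'star, φstar)) := by
  haveI : Nonempty (Fin L) := Fin.pos_iff_nonempty.1 hL
  rintro ⟨π, π', φ⟩ ⟨hθ1', hθ2', hθ3'⟩
  have hθ1 : closedSimplex π := hθ1'
  have hθ2 : closedSimplex π' := hθ2'
  have hθ3 : ∀ l, closedSimplex (φ l) := hθ3'
  clear hθ1' hθ2' hθ3'
  set qstar : Fin K → ℝ := fun k => ∑ l, π'star l * φstar l k with hqstar
  set q : Fin K → ℝ := fun k => ∑ l, π' l * φ l k with hq
  have hqstar_pos : ∀ k, 0 < qstar k := fun k =>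
    Finset.sum_pos (fun l _ => mul_pos (hπ'.1 l) ((hφ l).1 k)) Finset.univ_nonempty
  have hq_nonneg : ∀ k, 0 ≤ q k := fun k =>
    Finset.sum_nonneg fun l _ => mul_nonneg (hθ2.1 l) ((hθ3 l).1 k)
  -- Term 1
  have G1 := elog_gibbs πstar πstar π hπ.1 hπ.1 hθ1.1 (by
    have h0 : ∀ l, πstar l * (π l / πstar l) = π l := fun l => by
      rw [mul_div_assoc']; exact mul_div_cancel_left₀ _ (hπ.1 l).ne'
    rw [Finset.sum_congr rfl fun l _ => h0 l, hθ1.2, hπ.2])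
  -- Term 2 (over the product type)
  have G2 := elog_gibbs (fun p : Fin L × Fin K => πstar p.1 * φstar p.1 p.2)
      (fun p : Fin L × Fin K => φstar p.1 p.2) (fun p : Fin L × Fin K => φ p.1 p.2)
      (fun p => mul_pos (hπ.1 p.1) ((hφ p.1).1 p.2))
      (fun p => (hφ p.1).1 p.2) (fun p => (hθ3 p.1).1 p.2) (by
        have h1 : ∀ p : Fin L × Fin K,
            (πstar p.1 * φstar p.1 p.2) * (φ p.1 p.2 / φstar p.1 p.2) =
              πstar p.1 * φ p.1 p.2 := fun p => by
          rw [mul_assoc, mul_div_assoc']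
          rw [mul_div_cancel_left₀ _ ((hφ p.1).1 p.2).ne']
        rw [Finset.sum_congr rfl fun p _ => h1 p]
        rw [Fintype.sum_prod_type, Fintype.sum_prod_type]
        have h2 : ∑ l, ∑ k, πstar l * φ l k = 1 := by
          rw [Finset.sum_congr rfl fun l (_ : l ∈ Finset.univ) => by
            rw [← Finset.mul_sum, (hθ3 l).2, mul_one]]
          exact hπ.2
        have h3 : ∑ l, ∑ k, πstar l * φstar l k = 1 := by
          rw [Finset.sum_congr rfl fun l (_ : l ∈ Finset.univ) => by
            rw [← Finset.mul_sum, (hφ l).2, mul_one]]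
          exact hπ.2
        rw [h2, h3])
  -- Term 3
  have G3 := elog_gibbs qstar qstar q hqstar_pos hqstar_pos hq_nonneg (by
    have h1 : ∀ k, qstar k * (q k / qstar k) = q k := fun k => by
      rw [mul_div_assoc']; exact mul_div_cancel_left₀ _ (hqstar_pos k).ne'
    rw [Finset.sum_congr rfl fun k _ => h1 k]
    have h2 : ∑ k, q k = 1 := by
      simp only [hq]
      rw [Finset.sum_comm]
      rw [Finset.sum_congr rfl fun l (_ : l ∈ Finset.univ) => by
        rw [← Finset.mul_sum, (hθ3 l).2, mul_one]]
      exact hθ2.2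
    have h3 : ∑ k, qstar k = 1 := by
      simp only [hqstar]
      rw [Finset.sum_comm]
      rw [Finset.sum_congr rfl fun l (_ : l ∈ Finset.univ) => by
        rw [← Finset.mul_sum, (hφ l).2, mul_one]]
      exact hπ'.2
    rw [h2, h3])
  -- Real values at the maximizer
  set Astar : ℝ := ∑ l, πstar l * Real.log (πstar l) with hAstar
  set Bstar : ℝ := ∑ p : Fin L × Fin K, (πstar p.1 * φstar p.1 p.2) * Real.log (φstar p.1 p.2)
    with hBstar
  set Cstar : ℝ := ∑ k, qstar k * Real.log (qstar k) with hCstar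
  have e1 : (∑ l, ((πstar l : ℝ) : EReal) * elog (πstar l)) = ((Astar : ℝ) : EReal) :=
    sum_elog_coe _ _ hπ.1
  have e2 : (∑ p : Fin L × Fin K, ((πstar p.1 * φstar p.1 p.2 : ℝ) : EReal) *
      elog (φstar p.1 p.2)) = ((Bstar : ℝ) : EReal) :=
    sum_elog_coe _ _ fun p => (hφ p.1).1 p.2
  have e3 : (∑ k, ((qstar k : ℝ) : EReal) * elog (qstar k)) = ((Cstar : ℝ) : EReal) :=
    sum_elog_coe _ _ hqstar_pos
  -- conversions between double sums and product-type sums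
  have conv2 : ∀ (ψ : Fin L → Fin K → ℝ),
      (∑ l, ∑ k, ((πstar l * φstar l k : ℝ) : EReal) * elog (ψ l k)) =
      ∑ p : Fin L × Fin K, ((πstar p.1 * φstar p.1 p.2 : ℝ) : EReal) * elog (ψ p.1 p.2) :=
    fun ψ => (Fintype.sum_prod_type
      (f := fun p : Fin L × Fin K =>
        ((πstar p.1 * φstar p.1 p.2 : ℝ) : EReal) * elog (ψ p.1 p.2))).symm
  -- multiplication by c
  have CM := ereal_cmul c hc (∑ k, ((qstar k : ℝ) : EReal) * elog (q k)) Cstar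
    (by rw [← e3]; exact G3.1)
  -- value decompositions
  have hMθ : populationObjective L K πstar π'star φstar c (π, π', φ) =
      (∑ l, ((πstar l : ℝ) : EReal) * elog (π l)) +
      (∑ l, ∑ k, ((πstar l * φstar l k : ℝ) : EReal) * elog (φ l k)) +
      ((c : ℝ) : EReal) * ∑ k, ((qstar k : ℝ) : EReal) * elog (q k) := rfl
  have hMstar : populationObjective L K πstar π'star φstar c (πstar, π'star, φstar) =
      (∑ l, ((πstar l : ℝ) : EReal) * elog (πstar l)) +
      (∑ l, ∑ k, ((πstar l * φstar l k : ℝ) : EReal) * elog (φstar l k)) +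
      ((c : ℝ) : EReal) * ∑ k, ((qstar k : ℝ) : EReal) * elog (qstar k) := rfl
  have H := ereal_add3_split
    (∑ l, ((πstar l : ℝ) : EReal) * elog (π l))
    (∑ p : Fin L × Fin K, ((πstar p.1 * φstar p.1 p.2 : ℝ) : EReal) * elog (φ p.1 p.2))
    (((c : ℝ) : EReal) * ∑ k, ((qstar k : ℝ) : EReal) * elog (q k))
    Astar Bstar (c * Cstar)
    (by rw [← e1]; exact G1.1) (by rw [← e2]; exact G2.1) CM.1
  rw [hMθ, hMstar, conv2 φ, conv2 φstar, e1, e2, e3,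
    show ((c : ℝ) : EReal) * ((Cstar : ℝ) : EReal) = ((c * Cstar : ℝ) : EReal) from
      (EReal.coe_mul c Cstar).symm]
  refine ⟨H.1, ?_, ?_⟩
  · intro heq
    obtain ⟨h1, h2, h3⟩ := H.2.1 heq
    have hπeq : π = πstar := G1.2.1 (by rw [h1, ← e1])
    have hφeq : φ = φstar := by
      have h5 := G2.2.1 (by rw [h2, ← e2])
      funext l k
      exact congrFun h5 (l, k)
    have hqeq : q = qstar := G3.2.1 (by rw [e3]; exact CM.2.1 h3)
    have hπ'eq : π' = π'star := by
      have hv : ∀ k, ∑ l, (π' l - π'star l) * (Matrix.of φstar) l k = 0 := by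
        intro k
        have hk : ∑ l, π' l * φ l k = ∑ l, π'star l * φstar l k := congrFun hqeq k
        rw [hφeq] at hk
        simp only [Matrix.of_apply]
        rw [Finset.sum_congr rfl fun l (_ : l ∈ Finset.univ) =>
          sub_mul (π' l) (π'star l) (φstar l k),
          Finset.sum_sub_distrib, hk, sub_self]
      have h6 := vecMul_inj (Matrix.of φstar) hrank _ hv
      funext l
      have h0 := congrFun h6 l
      simp only [Pi.zero_apply] at h0
      linarith [h0]
    rw [hπeq, hφeq, hπ'eq]
  · intro heq
    have ha : π = πstar := congrArg Prod.fst heq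
    have hb : π' = π'star := congrArg (fun t => t.2.1) heq
    have hcφ : φ = φstar := congrArg (fun t => t.2.2) heq
    have hq' : q = qstar := by
      funext k
      simp only [hq, hqstar, hb, hcφ]
    rw [ha, hcφ, hq', e1, e2, e3, (EReal.coe_mul c Cstar).symm]
end

section
/- Let L, K be positive integers, let π'* ∈ Δ^{L-1} (open simplex), and let φ* be an L×K matrix whose rows lie in the open simplex Δ^{K-1} and which has rank L. Let p* = φ*^T π'* ∈ Δ^{K-1}. Then the cross-entropy function h(π') = Σ_{k=1}^K p*_k log((φ*^T π')_k), defined on the closed simplex Δ̄^{L-1} with values in [−∞, ∞) under the convention log 0 = −∞, attains its maximum uniquely at π' = π'*: h(π') ≤ h(π'*) for all π' ∈ Δ̄^{L-1}, with equality if and only if π' = π'*. -/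
open Finset

/-- The cross-entropy `h(π') = Σ_k p*_k log((φ*ᵀ π')_k)` with `p* = φ*ᵀ π'*`,
valued in the extended reals with `log 0 = -∞`. -/
noncomputable def crossEntropy (L K : ℕ)
    (π'star : Fin L → ℝ) (φstar : Fin L → Fin K → ℝ) (π' : Fin L → ℝ) : EReal :=
  ∑ k, ((∑ l, φstar l k * π'star l : ℝ) : EReal) * elog (∑ l, φstar l k * π' l)

/-- Real Gibbs inequality. -/
lemma gibbs_le {K : ℕ} {p q : Fin K → ℝ} (hp : ∀ k, 0 < p k) (hq : ∀ k, 0 < q k)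
    (hps : ∑ k, p k = 1) (hqs : ∑ k, q k = 1) :
    ∑ k, p k * Real.log (q k) ≤ ∑ k, p k * Real.log (p k) := by
  have key : ∀ k, p k * Real.log (q k) - p k * Real.log (p k) ≤ q k - p k := by
    intro k
    have h1 : Real.log (q k / p k) ≤ q k / p k - 1 :=
      Real.log_le_sub_one_of_pos (div_pos (hq k) (hp k))
    have h2 : Real.log (q k / p k) = Real.log (q k) - Real.log (p k) :=
      Real.log_div (ne_of_gt (hq k)) (ne_of_gt (hp k))
    rw [h2] at h1
    have := mul_le_mul_of_nonneg_left h1 (le_of_lt (hp k))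
    rw [mul_sub, mul_sub, mul_div_cancel₀ _ (ne_of_gt (hp k)), mul_one] at this
    linarith
  have : ∑ k, (p k * Real.log (q k) - p k * Real.log (p k)) ≤ ∑ k, (q k - p k) :=
    Finset.sum_le_sum (fun k _ => key k)
  rw [Finset.sum_sub_distrib, Finset.sum_sub_distrib, hps, hqs] at this
  linarith

/-- Strict real Gibbs inequality when `q ≠ p`. -/
lemma gibbs_lt {K : ℕ} {p q : Fin K → ℝ} (hp : ∀ k, 0 < p k) (hq : ∀ k, 0 < q k)
    (hps : ∑ k, p k = 1) (hqs : ∑ k, q k = 1) (hne : q ≠ p) :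
    ∑ k, p k * Real.log (q k) < ∑ k, p k * Real.log (p k) := by
  obtain ⟨k0, hk0⟩ : ∃ k, q k ≠ p k := Function.ne_iff.mp hne
  have key : ∀ k, p k * Real.log (q k) - p k * Real.log (p k) ≤ q k - p k := by
    intro k
    have h1 : Real.log (q k / p k) ≤ q k / p k - 1 :=
      Real.log_le_sub_one_of_pos (div_pos (hq k) (hp k))
    have h2 : Real.log (q k / p k) = Real.log (q k) - Real.log (p k) :=
      Real.log_div (ne_of_gt (hq k)) (ne_of_gt (hp k))
    rw [h2] at h1
    have := mul_le_mul_of_nonneg_left h1 (le_of_lt (hp k))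
    rw [mul_sub, mul_sub, mul_div_cancel₀ _ (ne_of_gt (hp k)), mul_one] at this
    linarith
  have keys : p k0 * Real.log (q k0) - p k0 * Real.log (p k0) < q k0 - p k0 := by
    have hne1 : q k0 / p k0 ≠ 1 := by
      intro h
      exact hk0 ((div_eq_one_iff_eq (ne_of_gt (hp k0))).mp h)
    have h1 : Real.log (q k0 / p k0) < q k0 / p k0 - 1 :=
      Real.log_lt_sub_one_of_pos (div_pos (hq k0) (hp k0)) hne1
    have h2 : Real.log (q k0 / p k0) = Real.log (q k0) - Real.log (p k0) :=
      Real.log_div (ne_of_gt (hq k0)) (ne_of_gt (hp k0))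
    rw [h2] at h1
    have := mul_lt_mul_of_pos_left h1 (hp k0)
    rw [mul_sub, mul_sub, mul_div_cancel₀ _ (ne_of_gt (hp k0)), mul_one] at this
    linarith
  have hlt : ∑ k, (p k * Real.log (q k) - p k * Real.log (p k)) < ∑ k, (q k - p k) :=
    Finset.sum_lt_sum (fun k _ => key k) ⟨k0, Finset.mem_univ k0, keys⟩
  rw [Finset.sum_sub_distrib, Finset.sum_sub_distrib, hps, hqs] at hlt
  linarith

lemma ereal_coe_sum {α : Type*} (s : Finset α) (f : α → ℝ) :
    ((∑ i ∈ s, f i : ℝ) : EReal) = ∑ i ∈ s, ((f i : ℝ) : EReal) := by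
  induction s using Finset.cons_induction with
  | empty => simp
  | cons a s ha ih => rw [Finset.sum_cons, Finset.sum_cons, EReal.coe_add, ih]

/-- With `π'*` in the open simplex and `φ*` row-wise in the open simplex of
rank `L`, the cross-entropy `h(π') = Σ_k p*_k log((φ*ᵀ π')_k)`, `p* = φ*ᵀ π'*`, attains its
maximum over the closed simplex uniquely at `π' = π'*`. -/
theorem cross_entropy_unique_max
    (L K : ℕ) (hL : 0 < L) (hK : 0 < K)
    (π'star : Fin L → ℝ) (φstar : Fin L → Fin K → ℝ)
    (hπ' : openSimplex π'star) (hφ : ∀ l, openSimplex (φstar l))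
    (hrank : (Matrix.of φstar).rank = L) :
    ∀ π' : Fin L → ℝ, closedSimplex π' →
      crossEntropy L K π'star φstar π' ≤ crossEntropy L K π'star φstar π'star ∧
      (crossEntropy L K π'star φstar π' = crossEntropy L K π'star φstar π'star ↔
        π' = π'star) := by
  intro π' hπ
  -- notation
  set p : Fin K → ℝ := fun k => ∑ l, φstar l k * π'star l with hpdef
  set q : Fin K → ℝ := fun k => ∑ l, φstar l k * π' l with hqdef
  have : Nonempty (Fin L) := Fin.pos_iff_nonempty.mp hL
  have hLne : (Finset.univ : Finset (Fin L)).Nonempty := Finset.univ_nonempty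
  have hp : ∀ k, 0 < p k := fun k =>
    Finset.sum_pos (fun l _ => mul_pos ((hφ l).1 k) (hπ'.1 l)) hLne
  have hq0 : ∀ k, 0 ≤ q k := fun k =>
    Finset.sum_nonneg (fun l _ => mul_nonneg (le_of_lt ((hφ l).1 k)) (hπ.1 l))
  have hps : ∑ k, p k = 1 := by
    rw [hpdef, Finset.sum_comm]
    calc ∑ l, ∑ k, φstar l k * π'star l = ∑ l, (∑ k, φstar l k) * π'star l := by
          simp [Finset.sum_mul]
      _ = ∑ l, π'star l := by
          refine Finset.sum_congr rfl fun l _ => by rw [(hφ l).2, one_mul]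
      _ = 1 := hπ'.2
  have hqs : ∑ k, q k = 1 := by
    rw [hqdef, Finset.sum_comm]
    calc ∑ l, ∑ k, φstar l k * π' l = ∑ l, (∑ k, φstar l k) * π' l := by
          simp [Finset.sum_mul]
      _ = ∑ l, π' l := by
          refine Finset.sum_congr rfl fun l _ => by rw [(hφ l).2, one_mul]
      _ = 1 := hπ.2
  -- the value at π'star is the coercion of a real number
  have hstar : crossEntropy L K π'star φstar π'star
      = ((∑ k, p k * Real.log (p k) : ℝ) : EReal) := by
    rw [crossEntropy, ereal_coe_sum]
    refine Finset.sum_congr rfl fun k _ => ?_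
    rw [elog, if_neg (ne_of_gt (hp k)), ← EReal.coe_mul]
  -- injectivity consequence of the rank hypothesis
  have hinj : q = p → π' = π'star := by
    intro hqp
    set M : Matrix (Fin K) (Fin L) ℝ := (Matrix.of φstar).transpose with hM
    have hMrank : M.rank = L := by
      rw [hM, Matrix.rank_transpose, hrank]
    have hinj' : Function.Injective M.mulVecLin := by
      have h1 := LinearMap.finrank_range_add_finrank_ker M.mulVecLin
      rw [Matrix.rank] at hMrank
      rw [hMrank] at h1
      simp only [Module.finrank_pi, Fintype.card_fin] at h1
      have hker : Module.finrank ℝ (LinearMap.ker M.mulVecLin) = 0 := by omega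
      have : LinearMap.ker M.mulVecLin = ⊥ := Submodule.finrank_eq_zero.mp hker
      exact LinearMap.ker_eq_bot.mp this
    have hMv : M.mulVecLin π' = M.mulVecLin π'star := by
      funext k
      have := congrFun hqp k
      simp only [hM, Matrix.mulVecLin_apply, Matrix.mulVec, dotProduct,
        Matrix.transpose_apply, Matrix.of_apply, Matrix.vecMul, Matrix.mulVec_transpose]
      exact this
    exact hinj' hMv
  by_cases hzero : ∀ k, 0 < q k
  · -- all positive case
    have hval : crossEntropy L K π'star φstar π'
        = ((∑ k, p k * Real.log (q k) : ℝ) : EReal) := by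
      rw [crossEntropy, ereal_coe_sum]
      refine Finset.sum_congr rfl fun k _ => ?_
      rw [elog, if_neg (ne_of_gt (hzero k)), ← EReal.coe_mul]
    rw [hval, hstar]
    constructor
    · exact_mod_cast gibbs_le hp hzero hps hqs
    · constructor
      · intro heq
        have heq' : ∑ k, p k * Real.log (q k) = ∑ k, p k * Real.log (p k) :=
          by exact_mod_cast heq
        by_contra hne
        have hqp : q ≠ p := fun h => hne (hinj h)
        exact absurd heq' (ne_of_lt (gibbs_lt hp hzero hps hqs hqp))
      · intro h
        subst h
        rfl
  · -- some q k = 0 : cross entropy is ⊥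
    push_neg at hzero
    obtain ⟨k0, hk0⟩ := hzero
    have hk0' : q k0 = 0 := le_antisymm hk0 (hq0 k0)
    have hbot : crossEntropy L K π'star φstar π' = ⊥ := by
      rw [crossEntropy, ← Finset.add_sum_erase _ _ (Finset.mem_univ k0)]
      have h1 : elog (∑ l, φstar l k0 * π' l) = ⊥ := by
        rw [elog, if_pos]
        exact hk0'
      rw [h1, EReal.coe_mul_bot_of_pos (hp k0), EReal.bot_add]
    rw [hbot, hstar]
    constructor
    · exact bot_le
    · constructor
      · intro h
        exact absurd h.symm (EReal.coe_ne_bot _)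
      · intro h
        subst h
        exact absurd hk0' (ne_of_gt (hp k0))
end
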